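/- arXiv:2112.13409 — 3 statements merged into one kernel-verified Lean document; each statement's English description precedes it below -/
import Mathlib

section
/- Let s ∈ {0,1}, ℓ a nonnegative integer, λ₁, λ₂ ≥ 0 real, and f ∈ 𝓕(0,s,ℓ;λ₁,λ₂) with witness function g_ℓ. Let k ≥ 2 be an integer. Then, as x → ∞, ∑_{n₁,…,n_k ≤ x} f(gcd(n₁,…,n_k)) = F·x^k + O(x^{k−1} (log x)^{ℓ+1}), where F = ∑_{p prime} ( λ₁/p^k + λ₂ ∑_{α=2}^∞ g_ℓ(α)/p^{αk−s} ). -/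
open Filter Finset MeasureTheory

/-- The `k`-fold sum of `f (gcd (n₁, …, n_k))` over positive integers `nᵢ ≤ x`. -/
noncomputable def gcdSum (f : ℕ → ℝ) (k : ℕ) (x : ℝ) : ℝ :=
  ∑ n ∈ Fintype.piFinset (fun _ : Fin k => Finset.Icc 1 ⌊x⌋₊), f (Finset.univ.gcd n)



noncomputable def hpf (f : ℕ → ℝ) (p β : ℕ) : ℝ := f (p ^ β) - f (p ^ (β - 1))

lemma f_one_eq_zero (f : ℕ → ℝ)
    (hadd : ∀ m n : ℕ, 1 ≤ m → 1 ≤ n → Nat.Coprime m n → f (m * n) = f m + f n) :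
    f 1 = 0 := by
  have h := hadd 1 1 le_rfl le_rfl (Nat.coprime_one_left 1)
  simp only [mul_one] at h
  linarith

lemma f_factorization (f : ℕ → ℝ)
    (hadd : ∀ m n : ℕ, 1 ≤ m → 1 ≤ n → Nat.Coprime m n → f (m * n) = f m + f n)
    {n : ℕ} (hn : n ≠ 0) :
    f n = ∑ p ∈ n.factorization.support, f (p ^ n.factorization p) := by
  have h1 : f 1 = 0 := f_one_eq_zero f hadd
  have hmult : ∀ x y : ℕ, Nat.Coprime x y →
      Real.exp (f (x * y)) = Real.exp (f x) * Real.exp (f y) := by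
    intro x y hxy
    rcases Nat.eq_zero_or_pos x with rfl | hx
    · have hy1 : y = 1 := by simpa using hxy
      subst hy1; simp [h1]
    rcases Nat.eq_zero_or_pos y with rfl | hy
    · have hx1 : x = 1 := by simpa [Nat.coprime_zero_right] using hxy
      subst hx1; simp [h1]
    · rw [hadd x y hx hy hxy, Real.exp_add]
  have hmf := Nat.multiplicative_factorization (fun m => Real.exp (f m)) hmult
    (by simp [h1]) hn
  rw [Finsupp.prod, ← Real.exp_sum] at hmf
  exact Real.exp_injective hmf

lemma sum_hpf (f : ℕ → ℝ) (h1 : f 1 = 0) (p v : ℕ) :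
    ∑ β ∈ Finset.range v, hpf f p (β + 1) = f (p ^ v) := by
  have h : ∀ β : ℕ, hpf f p (β + 1) = f (p ^ (β + 1)) - f (p ^ β) := by
    intro β; simp [hpf]
  rw [Finset.sum_congr rfl (fun β _ => h β), Finset.sum_range_sub (fun β => f (p ^ β))]
  simp [h1]

lemma f_expand (f : ℕ → ℝ)
    (hadd : ∀ m n : ℕ, 1 ≤ m → 1 ≤ n → Nat.Coprime m n → f (m * n) = f m + f n)
    {N n : ℕ} (hn1 : 1 ≤ n) (hnN : n ≤ N) :
    f n = ∑ p ∈ Finset.range (N + 1), ∑ β ∈ Finset.range N,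
      (if p.Prime ∧ p ^ (β + 1) ∣ n then hpf f p (β + 1) else 0) := by
  have h1 : f 1 = 0 := f_one_eq_zero f hadd
  have hn0 : n ≠ 0 := by omega
  have key : ∀ p : ℕ, (∑ β ∈ Finset.range N,
      (if p.Prime ∧ p ^ (β + 1) ∣ n then hpf f p (β + 1) else 0))
      = if p.Prime then f (p ^ n.factorization p) else 0 := by
    intro p
    by_cases pp : p.Prime
    · simp only [pp, true_and, if_true]
      have hdvd : ∀ β : ℕ, (p ^ (β + 1) ∣ n) ↔ β < n.factorization p := by
        intro β
        rw [Nat.Prime.pow_dvd_iff_le_factorization pp hn0]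
        omega
      have hvN : n.factorization p ≤ N := le_trans (Nat.factorization_lt p hn0).le hnN
      calc ∑ β ∈ Finset.range N, (if p ^ (β + 1) ∣ n then hpf f p (β + 1) else 0)
          = ∑ β ∈ Finset.range N, (if β < n.factorization p then hpf f p (β + 1) else 0) := by
            exact Finset.sum_congr rfl (fun β _ => if_congr (hdvd β) rfl rfl)
        _ = ∑ β ∈ (Finset.range N).filter (fun β => β < n.factorization p),
              hpf f p (β + 1) := (Finset.sum_filter _ _).symm
        _ = ∑ β ∈ Finset.range (n.factorization p), hpf f p (β + 1) := by
            congr 1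
            ext β
            simp only [Finset.mem_filter, Finset.mem_range]
            omega
        _ = f (p ^ n.factorization p) := sum_hpf f h1 p _
    · simp [pp]
  rw [Finset.sum_congr rfl (fun p _ => key p)]
  rw [f_factorization f hadd hn0]
  rw [← Finset.sum_filter]
  apply Finset.sum_subset
  · intro p hp
    have pp := Nat.prime_of_mem_primeFactors (by rwa [Nat.support_factorization] at hp)
    have hdvd : p ∣ n := Nat.dvd_of_mem_primeFactors (by rwa [Nat.support_factorization] at hp)
    have : p ≤ n := Nat.le_of_dvd (by omega) hdvd
    simp only [Finset.mem_filter, Finset.mem_range]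
    exact ⟨by omega, pp⟩
  · intro p _ hps
    have : n.factorization p = 0 := by
      by_contra h
      exact hps (Finsupp.mem_support_iff.mpr h)
    rw [this, pow_zero, h1]

lemma count_dvd (N k d : ℕ) (hk : 0 < k) (hd : 0 < d) :
    ((Fintype.piFinset fun _ : Fin k => Finset.Icc 1 N).filter
      (fun n => d ∣ Finset.univ.gcd n)).card = (N / d) ^ k := by
  have h1 : (Fintype.piFinset fun _ : Fin k => Finset.Icc 1 N).filter
        (fun n => d ∣ Finset.univ.gcd n)
      = Fintype.piFinset (fun _ : Fin k => (Finset.Icc 1 N).filter (fun m => d ∣ m)) := by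
    ext n
    simp only [Finset.mem_filter, Fintype.mem_piFinset, Finset.dvd_gcd_iff, Finset.mem_univ,
      forall_true_left]
    constructor
    · rintro ⟨h1, h2⟩ i; exact ⟨h1 i, h2 i⟩
    · intro h; exact ⟨fun i => (h i).1, fun i => (h i).2⟩
  rw [h1, Fintype.card_piFinset]
  have h2 : ((Finset.Icc 1 N).filter (fun m => d ∣ m)).card = N / d := by
    rw [show Finset.Icc 1 N = Finset.Ioc 0 N from rfl]
    exact Nat.Ioc_filter_dvd_card_eq_div N d
  simp [h2]

lemma sum_ite_dvd_gcd (N k d : ℕ) (hk : 0 < k) (hd : 0 < d) (c : ℝ) :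
    (∑ n ∈ Fintype.piFinset (fun _ : Fin k => Finset.Icc 1 N),
      (if d ∣ Finset.univ.gcd n then c else 0)) = ((N / d : ℕ) : ℝ) ^ k * c := by
  rw [← Finset.sum_filter, Finset.sum_const, count_dvd N k d hk hd, nsmul_eq_mul]
  push_cast
  ring

lemma Cseq_summable (ℓ : ℕ) : Summable (fun β : ℕ => ((β : ℝ) + 1) ^ ℓ * (1 / 2) ^ β) := by
  have h : Summable (fun n : ℕ => (n : ℝ) ^ ℓ * (1 / 2 : ℝ) ^ n) :=
    summable_pow_mul_geometric_of_norm_lt_one ℓ (by rw [Real.norm_eq_abs, abs_lt]; norm_num)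
  have h2 : Summable (fun n : ℕ => ((n + 1 : ℕ) : ℝ) ^ ℓ * (1 / 2 : ℝ) ^ (n + 1)) :=
    (summable_nat_add_iff 1).mpr h
  have h3 := h2.mul_left 2
  apply h3.congr
  intro β
  push_cast
  rw [pow_succ]
  ring

lemma pow_sub_pow_le_real {a b : ℝ} (ha : 0 ≤ a) (hab : a ≤ b) (n : ℕ) :
    b ^ (n + 1) - a ^ (n + 1) ≤ ((n : ℝ) + 1) * b ^ n * (b - a) := by
  induction n with
  | zero => simp
  | succ n ih =>
    have hb : 0 ≤ b := ha.trans hab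
    have han : a ^ (n + 1) ≤ b ^ (n + 1) := pow_le_pow_left₀ ha hab (n + 1)
    calc b ^ (n + 2) - a ^ (n + 2)
        = b * (b ^ (n + 1) - a ^ (n + 1)) + a ^ (n + 1) * (b - a) := by ring
      _ ≤ b * (((n : ℝ) + 1) * b ^ n * (b - a)) + b ^ (n + 1) * (b - a) := by
          apply add_le_add (mul_le_mul_of_nonneg_left ih hb)
          apply mul_le_mul_of_nonneg_right han (by linarith)
      _ = ((n : ℝ) + 2) * b ^ (n + 1) * (b - a) := by ring
      _ = ((((n + 1) : ℕ) : ℝ) + 1) * b ^ (n + 1) * (b - a) := by push_cast; ring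

lemma tail_sq (N : ℕ) (hN : 1 ≤ N) :
    ∑' m : ℕ, (if N < m then ((m : ℝ) ^ 2)⁻¹ else 0) ≤ 1 / N := by
  have hN0 : (0 : ℝ) < N := by exact_mod_cast hN
  -- telescoping series
  set T : ℕ → ℝ := fun i => 1 / ((N : ℝ) + i) - 1 / ((N : ℝ) + i + 1) with hT
  have hTpos : ∀ i, 0 ≤ T i := by
    intro i
    have h1 : (0 : ℝ) < (N : ℝ) + i := by positivity
    have h2 : (0 : ℝ) < (N : ℝ) + i + 1 := by positivity
    simp only [hT, sub_nonneg]
    apply one_div_le_one_div_of_le h1 (by linarith)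
  have hsumT : HasSum T (1 / N) := by
    rw [hasSum_iff_tendsto_nat_of_nonneg hTpos]
    have hps : ∀ n : ℕ, ∑ i ∈ Finset.range n, T i = 1 / (N : ℝ) - 1 / ((N : ℝ) + n) := by
      intro n
      have := Finset.sum_range_sub' (fun i => 1 / ((N : ℝ) + i)) n
      simp only [Nat.cast_zero, add_zero] at this
      rw [← this]
      apply Finset.sum_congr rfl
      intro i _
      simp only [hT]
      push_cast
      ring_nf
    simp only [hps]
    have htend : Tendsto (fun n : ℕ => ((N : ℝ) + n)⁻¹) atTop (nhds 0) :=
      (tendsto_atTop_add_const_left atTop (N : ℝ) tendsto_natCast_atTop_atTop).inv_tendsto_atTop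
    have h2 := (tendsto_const_nhds (x := 1 / (N : ℝ)) (f := atTop (α := ℕ))).sub htend
    simp only [sub_zero] at h2
    apply h2.congr
    intro n
    simp [one_div]
  have hsummT : Summable T := hsumT.summable
  -- reindex the if-sum
  set G : ℕ → ℝ := fun m => if N < m then ((m : ℝ) ^ 2)⁻¹ else 0 with hG
  have hre : ∑' m, G m = ∑' i : ℕ, G (i + (N + 1)) := by
    refine (Function.Injective.tsum_eq (add_left_injective (N + 1)) ?_).symm
    intro m hm
    rw [Function.mem_support] at hm
    have hNm : N < m := by
      by_contra h
      exact hm (by simp [hG, h])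
    refine ⟨m - (N + 1), ?_⟩
    show m - (N + 1) + (N + 1) = m
    omega
  rw [hre]
  have hGi : ∀ i : ℕ, G (i + (N + 1)) = (((i + (N + 1) : ℕ) : ℝ) ^ 2)⁻¹ := by
    intro i
    simp only [hG]
    rw [if_pos (by omega)]
  have hle : ∀ i : ℕ, G (i + (N + 1)) ≤ T i := by
    intro i
    rw [hGi i]
    have h1 : (0 : ℝ) < (N : ℝ) + i := by positivity
    have h2 : (0 : ℝ) < (N : ℝ) + i + 1 := by positivity
    have key : T i = (((N : ℝ) + i) * ((N : ℝ) + i + 1))⁻¹ := by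
      simp only [hT]
      rw [div_sub_div _ _ (ne_of_gt h1) (ne_of_gt h2)]
      rw [show (1 * ((N:ℝ) + i + 1) - ((N:ℝ) + i) * 1) = 1 by ring, ← inv_eq_one_div]
    rw [key]
    have hcast : ((i + (N + 1) : ℕ) : ℝ) = (N : ℝ) + i + 1 := by push_cast; ring
    rw [hcast]
    apply inv_anti₀ (by positivity)
    nlinarith
  have hsummG : Summable (fun i : ℕ => G (i + (N + 1))) := by
    apply Summable.of_nonneg_of_le ?_ hle hsummT
    intro i
    rw [hGi i]
    positivity
  calc ∑' i : ℕ, G (i + (N + 1)) ≤ ∑' i, T i := Summable.tsum_le_tsum hle hsummG hsummT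
    _ = 1 / N := hsumT.tsum_eq


lemma hp_bound (f g : ℕ → ℝ) (lam1 lam2 C0 : ℝ) (s ℓ : ℕ)
    (hs : s ≤ 1) (hlam1 : 0 ≤ lam1) (hlam2 : 0 ≤ lam2) (hC0 : 0 ≤ C0)
    (h1 : f 1 = 0)
    (hfp : ∀ p : ℕ, p.Prime → f p = lam1)
    (hfpa : ∀ p : ℕ, p.Prime → ∀ α : ℕ, 2 ≤ α →
      f (p ^ α) - f (p ^ (α - 1)) = lam2 * (p : ℝ) ^ s * g α)
    (hg : ∀ α : ℕ, 2 ≤ α → |g α| ≤ C0 * (α : ℝ) ^ ℓ)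
    (p : ℕ) (pp : p.Prime) (j : ℕ) (hj : 1 ≤ j) (β : ℕ) :
    |hpf f p (β + 1)| / (p : ℝ) ^ ((β + 1) * j)
      ≤ (lam1 + 2 * lam2 * C0) * ((β : ℝ) + 1) ^ ℓ * (1 / 2) ^ β / (p : ℝ) ^ j := by
  have hp2 : 2 ≤ p := pp.two_le
  have hp0R : (0 : ℝ) < p := by positivity
  have hpj : (0 : ℝ) < (p : ℝ) ^ j := by positivity
  cases β with
  | zero =>
    have : hpf f p 1 = lam1 := by
      simp only [hpf, pow_one, pow_zero, Nat.sub_self, h1, sub_zero]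
      exact hfp p pp
    rw [this, abs_of_nonneg hlam1]
    push_cast
    rw [zero_add, one_pow, mul_one, one_mul, pow_zero, mul_one]
    gcongr
    nlinarith [mul_nonneg hlam2 hC0]
  | succ β =>
    have hval : hpf f p (β + 1 + 1) = lam2 * (p : ℝ) ^ s * g (β + 2) := by
      simpa [hpf] using hfpa p pp (β + 2) (by omega)
    have habs : |hpf f p (β + 1 + 1)| ≤ lam2 * C0 * ((β : ℝ) + 2) ^ ℓ * (p : ℝ) ^ s := by
      rw [hval, abs_mul, abs_mul]
      have h1' : |lam2| = lam2 := abs_of_nonneg hlam2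
      have h2' : |(p : ℝ) ^ s| = (p : ℝ) ^ s := abs_of_nonneg (by positivity)
      rw [h1', h2']
      have := hg (β + 2) (by omega)
      calc lam2 * (p : ℝ) ^ s * |g (β + 2)| ≤ lam2 * (p : ℝ) ^ s * (C0 * ((β + 2 : ℕ) : ℝ) ^ ℓ) := by
            apply mul_le_mul_of_nonneg_left this (by positivity)
        _ = lam2 * C0 * ((β : ℝ) + 2) ^ ℓ * (p : ℝ) ^ s := by push_cast; ring
    -- nat inequality
    have natineq : p ^ s * 2 ^ (β + 1) * p ^ j ≤ 2 * p ^ ((β + 2) * j) := by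
      have e1 : p ^ s ≤ p := by
        calc p ^ s ≤ p ^ 1 := Nat.pow_le_pow_right (by omega) hs
          _ = p := pow_one p
      have e2 : 2 ^ β * p ≤ p ^ (β + 1) := by
        calc 2 ^ β * p ≤ p ^ β * p := Nat.mul_le_mul_right p (Nat.pow_le_pow_left hp2 β)
          _ = p ^ (β + 1) := (pow_succ p β).symm
      have e3 : p ^ (β + 1) ≤ p ^ ((β + 1) * j) := Nat.pow_le_pow_right (by omega) (by nlinarith)
      calc p ^ s * 2 ^ (β + 1) * p ^ j = (2 * p ^ j) * (p ^ s * 2 ^ β) := by ring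
        _ ≤ (2 * p ^ j) * (p * 2 ^ β) := by
            exact Nat.mul_le_mul_left _ (Nat.mul_le_mul_right _ e1)
        _ = (2 * p ^ j) * (2 ^ β * p) := by ring
        _ ≤ (2 * p ^ j) * p ^ ((β + 1) * j) := Nat.mul_le_mul_left _ (e2.trans e3)
        _ = 2 * p ^ ((β + 2) * j) := by rw [show (β + 2) * j = j + (β + 1) * j by ring]; ring
    have core : (p : ℝ) ^ s / (p : ℝ) ^ ((β + 2) * j)
        ≤ 2 * (1 / 2) ^ (β + 1) / (p : ℝ) ^ j := by
      rw [div_le_div_iff₀ (by positivity) hpj]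
      have : (2 : ℝ) * (1 / 2) ^ (β + 1) = 2 / 2 ^ (β + 1) := by
        rw [div_pow, one_pow]; ring
      rw [this, div_mul_eq_mul_div, le_div_iff₀ (by positivity)]
      calc (p : ℝ) ^ s * (p : ℝ) ^ j * 2 ^ (β + 1)
          = (p : ℝ) ^ s * 2 ^ (β + 1) * (p : ℝ) ^ j := by ring
        _ ≤ 2 * (p : ℝ) ^ ((β + 2) * j) := by exact_mod_cast natineq
        _ = 2 * (p:ℝ) ^ ((β+2)*j) := rfl
    calc |hpf f p (β + 1 + 1)| / (p : ℝ) ^ ((β + 1 + 1) * j)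
        ≤ (lam2 * C0 * ((β : ℝ) + 2) ^ ℓ * (p : ℝ) ^ s) / (p : ℝ) ^ ((β + 2) * j) := by
          gcongr
      _ = (lam2 * C0 * ((β : ℝ) + 2) ^ ℓ) * ((p : ℝ) ^ s / (p : ℝ) ^ ((β + 2) * j)) := by ring
      _ ≤ (lam2 * C0 * ((β : ℝ) + 2) ^ ℓ) * (2 * (1 / 2) ^ (β + 1) / (p : ℝ) ^ j) := by
          apply mul_le_mul_of_nonneg_left core (by positivity)
      _ = (2 * lam2 * C0) * ((β : ℝ) + 2) ^ ℓ * (1 / 2) ^ (β + 1) / (p : ℝ) ^ j := by ring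
      _ ≤ (lam1 + 2 * lam2 * C0) * ((β : ℝ) + 2) ^ ℓ * (1 / 2) ^ (β + 1) / (p : ℝ) ^ j := by
          gcongr
          linarith
      _ = (lam1 + 2 * lam2 * C0) * (((β + 1 :ℕ) : ℝ) + 1) ^ ℓ * (1 / 2) ^ (β + 1) / (p : ℝ) ^ j := by
          push_cast; ring

lemma gcdSum_eq (f : ℕ → ℝ)
    (hadd : ∀ m n : ℕ, 1 ≤ m → 1 ≤ n → Nat.Coprime m n → f (m * n) = f m + f n)
    (k N : ℕ) (hk : 0 < k) :
    (∑ n ∈ Fintype.piFinset (fun _ : Fin k => Finset.Icc 1 N), f (Finset.univ.gcd n))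
      = ∑ p ∈ Finset.range (N + 1),
          (if p.Prime then
            ∑ β ∈ Finset.range N, hpf f p (β + 1) * ((N / p ^ (β + 1) : ℕ) : ℝ) ^ k
          else 0) := by
  have step1 : ∀ n ∈ Fintype.piFinset (fun _ : Fin k => Finset.Icc 1 N),
      f (Finset.univ.gcd n) = ∑ p ∈ Finset.range (N + 1), ∑ β ∈ Finset.range N,
        (if p.Prime ∧ p ^ (β + 1) ∣ Finset.univ.gcd n then hpf f p (β + 1) else 0) := by
    intro n hn
    have i0 : Fin k := ⟨0, hk⟩
    have hmem : n i0 ∈ Finset.Icc 1 N := Fintype.mem_piFinset.mp hn i0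
    rw [Finset.mem_Icc] at hmem
    have hdvd : Finset.univ.gcd n ∣ n i0 := Finset.gcd_dvd (Finset.mem_univ i0)
    have hne : n i0 ≠ 0 := by omega
    have h1 : 1 ≤ Finset.univ.gcd n := by
      rcases Nat.eq_zero_or_pos (Finset.univ.gcd n) with h | h
      · rw [h] at hdvd; exact absurd (Nat.eq_zero_of_zero_dvd hdvd) hne
      · exact h
    have h2 : Finset.univ.gcd n ≤ N := le_trans (Nat.le_of_dvd (by omega) hdvd) hmem.2
    exact f_expand f hadd h1 h2
  rw [Finset.sum_congr rfl step1, Finset.sum_comm]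
  refine Finset.sum_congr rfl (fun p _ => ?_)
  by_cases pp : p.Prime
  · simp only [pp, true_and, if_true]
    rw [Finset.sum_comm]
    refine Finset.sum_congr rfl (fun β _ => ?_)
    rw [sum_ite_dvd_gcd N k (p ^ (β + 1)) hk (pow_pos pp.pos _)]
    ring
  · simp [pp]

section PerPrime

variable (f g : ℕ → ℝ) (lam1 lam2 C0 : ℝ) (s ℓ k : ℕ)

-- summability of the dominating geometric series, any constant
lemma dom_summable (c : ℝ) : Summable (fun β : ℕ => c * (((β : ℝ) + 1) ^ ℓ * (1 / 2) ^ β)) :=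
  (Cseq_summable ℓ).mul_left c

lemma per_prime
    (hs : s ≤ 1) (hlam1 : 0 ≤ lam1) (hlam2 : 0 ≤ lam2) (hC0 : 0 ≤ C0)
    (h1 : f 1 = 0)
    (hfp : ∀ p : ℕ, p.Prime → f p = lam1)
    (hfpa : ∀ p : ℕ, p.Prime → ∀ α : ℕ, 2 ≤ α →
      f (p ^ α) - f (p ^ (α - 1)) = lam2 * (p : ℝ) ^ s * g α)
    (hg : ∀ α : ℕ, 2 ≤ α → |g α| ≤ C0 * (α : ℝ) ^ ℓ)
    (hk : 2 ≤ k)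
    (x : ℝ) (hx1 : 1 ≤ x) (N : ℕ) (hN1 : 1 ≤ N) (hNx : (N : ℝ) ≤ x) (hxN1 : x < N + 1)
    (p : ℕ) (pp : p.Prime) :
    |(∑ β ∈ Finset.range N, hpf f p (β + 1) * ((N / p ^ (β + 1) : ℕ) : ℝ) ^ k)
        - x ^ k * (∑' β : ℕ, hpf f p (β + 1) * ((p : ℝ) ^ ((β + 1) * k))⁻¹)|
      ≤ 2 * k * x ^ (k - 1) * (lam1 + 2 * lam2 * C0)
          * (∑' β : ℕ, ((β : ℝ) + 1) ^ ℓ * (1 / 2) ^ β) * (p : ℝ)⁻¹ := by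
  have hp2 : 2 ≤ p := pp.two_le
  have hp0R : (0 : ℝ) < p := by positivity
  have hp1R : (1 : ℝ) ≤ p := by exact_mod_cast Nat.one_le_iff_ne_zero.mpr (by omega)
  have hx0 : (0 : ℝ) < x := lt_of_lt_of_le one_pos hx1
  set K := lam1 + 2 * lam2 * C0 with hK
  have hK0 : 0 ≤ K := by nlinarith
  set Cseq : ℕ → ℝ := fun β => ((β : ℝ) + 1) ^ ℓ * (1 / 2) ^ β with hCseq
  have hCseq0 : ∀ β, 0 ≤ Cseq β := fun β => by positivity
  set w1 : ℕ → ℝ := fun β => hpf f p (β + 1) * (x / (p : ℝ) ^ (β + 1)) ^ k with hw1def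
  set w2 : ℕ → ℝ := fun β => hpf f p (β + 1) * ((N / p ^ (β + 1) : ℕ) : ℝ) ^ k with hw2def
  -- bounds from hp_bound
  have hbnd : ∀ (j : ℕ), 1 ≤ j → ∀ β,
      |hpf f p (β + 1)| / (p : ℝ) ^ ((β + 1) * j) ≤ K * Cseq β / (p : ℝ) ^ j := by
    intro j hj β
    have := hp_bound f g lam1 lam2 C0 s ℓ hs hlam1 hlam2 hC0 h1 hfp hfpa hg p pp j hj β
    calc |hpf f p (β + 1)| / (p : ℝ) ^ ((β + 1) * j)
        ≤ K * ((β : ℝ) + 1) ^ ℓ * (1 / 2) ^ β / (p : ℝ) ^ j := this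
      _ = K * Cseq β / (p : ℝ) ^ j := by rw [hCseq]; ring
  -- pointwise bound on |w2 - w1|
  have hk1 : 1 ≤ k - 1 := by omega
  have hk11 : k - 1 + 1 = k := by omega
  have hkcast : ((k - 1 : ℕ) : ℝ) + 1 = (k : ℝ) := by
    rw [Nat.cast_sub (by omega)]; push_cast; ring
  have hpbpos : ∀ β : ℕ, (0 : ℝ) < (p : ℝ) ^ (β + 1) := fun β => by positivity
  have hptwise : ∀ β : ℕ, |w2 β - w1 β|
      ≤ (2 * k * x ^ (k - 1) * K * (p : ℝ)⁻¹) * Cseq β := by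
    intro β
    set d : ℝ := (p : ℝ) ^ (β + 1) with hd
    have hd0 : (0 : ℝ) < d := hpbpos β
    set a : ℝ := ((N / p ^ (β + 1) : ℕ) : ℝ) with ha
    set b : ℝ := x / d with hb
    have ha0 : 0 ≤ a := by positivity
    have hfloor : (N / p ^ (β + 1) : ℕ) = ⌊(N : ℝ) / d⌋₊ := by
      rw [hd, ← Nat.cast_pow, Nat.floor_div_natCast, Nat.floor_natCast]
    have hab : a ≤ b := by
      calc a ≤ (N : ℝ) / d := by
              rw [ha, hd, ← Nat.cast_pow]; exact Nat.cast_div_le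
        _ ≤ b := by rw [hb]; gcongr
    have hba : b - a ≤ 2 := by
      have h1' : (N : ℝ) / d < a + 1 := by
        rw [ha, hfloor]; exact Nat.lt_floor_add_one _
      have h2' : b ≤ (N : ℝ) / d + 1 / d := by
        rw [hb, ← add_div]
        gcongr <;> linarith
      have h3' : 1 / d ≤ 1 := by
        rw [div_le_one hd0, hd]
        calc (1 : ℝ) ≤ p := hp1R
          _ = (p : ℝ) ^ 1 := (pow_one _).symm
          _ ≤ (p : ℝ) ^ (β + 1) := pow_le_pow_right₀ hp1R (by omega)
      linarith
    have hpow : b ^ k - a ^ k ≤ (k : ℝ) * b ^ (k - 1) * 2 := by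
      have := pow_sub_pow_le_real ha0 hab (k - 1)
      rw [hk11] at this
      calc b ^ k - a ^ k ≤ (((k - 1 : ℕ) : ℝ) + 1) * b ^ (k - 1) * (b - a) := this
        _ = (k : ℝ) * b ^ (k - 1) * (b - a) := by rw [hkcast]
        _ ≤ (k : ℝ) * b ^ (k - 1) * 2 := by
            apply mul_le_mul_of_nonneg_left hba
            have hb0 : 0 ≤ b := ha0.trans hab
            positivity
    have habs : |w2 β - w1 β| = |hpf f p (β + 1)| * (b ^ k - a ^ k) := by
      rw [hw2def, hw1def]
      simp only
      rw [← ha, ← hb, ← mul_sub, abs_mul]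
      congr 1
      rw [abs_of_nonpos (by nlinarith [pow_le_pow_left₀ ha0 hab k] : a ^ k - b ^ k ≤ 0)]
      ring
    have hbk : b ^ (k - 1) = x ^ (k - 1) * ((p : ℝ) ^ ((β + 1) * (k - 1)))⁻¹ := by
      rw [hb, div_pow, hd, ← pow_mul, div_eq_mul_inv]
    calc |w2 β - w1 β| = |hpf f p (β + 1)| * (b ^ k - a ^ k) := habs
      _ ≤ |hpf f p (β + 1)| * ((k : ℝ) * b ^ (k - 1) * 2) := by
          apply mul_le_mul_of_nonneg_left hpow (abs_nonneg _)
      _ = (2 * k * x ^ (k - 1)) * (|hpf f p (β + 1)| / (p : ℝ) ^ ((β + 1) * (k - 1))) := by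
          rw [hbk, div_eq_mul_inv]; ring
      _ ≤ (2 * k * x ^ (k - 1)) * (K * Cseq β / (p : ℝ) ^ (k - 1)) := by
          apply mul_le_mul_of_nonneg_left (hbnd (k - 1) hk1 β) (by positivity)
      _ ≤ (2 * k * x ^ (k - 1)) * (K * Cseq β / (p : ℝ) ^ 1) := by
          apply mul_le_mul_of_nonneg_left ?_ (by positivity)
          apply div_le_div_of_nonneg_left ?_ (by positivity) ?_
          · positivity
          · exact pow_le_pow_right₀ hp1R hk1
      _ = (2 * k * x ^ (k - 1) * K * (p : ℝ)⁻¹) * Cseq β := by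
          rw [pow_one, div_eq_mul_inv]; ring
  -- summability facts
  have hw1sum : Summable w1 := by
    apply Summable.of_norm_bounded (dom_summable ℓ (x ^ k * K / (p : ℝ) ^ k))
    intro β
    rw [Real.norm_eq_abs, hw1def]
    simp only
    rw [abs_mul, abs_of_nonneg (by positivity : (0:ℝ) ≤ (x / (p : ℝ) ^ (β + 1)) ^ k)]
    rw [show (x / (p : ℝ) ^ (β + 1)) ^ k = x ^ k * ((p : ℝ) ^ ((β + 1) * k))⁻¹ by
      rw [div_pow, ← pow_mul, div_eq_mul_inv]]
    calc |hpf f p (β + 1)| * (x ^ k * ((p : ℝ) ^ ((β + 1) * k))⁻¹)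
        = x ^ k * (|hpf f p (β + 1)| / (p : ℝ) ^ ((β + 1) * k)) := by
          rw [div_eq_mul_inv]; ring
      _ ≤ x ^ k * (K * Cseq β / (p : ℝ) ^ k) :=
          mul_le_mul_of_nonneg_left (hbnd k (by omega) β) (by positivity)
      _ = (x ^ k * K / (p : ℝ) ^ k) * Cseq β := by ring
  have hw2zero : ∀ β ∉ Finset.range N, w2 β = 0 := by
    intro β hβ
    rw [Finset.mem_range, not_lt] at hβ
    have hlt : N < p ^ (β + 1) := by
      calc N ≤ β := hβ
        _ < 2 ^ (β + 1) := by
            have := Nat.lt_two_pow_self (n := β + 1)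
            omega
        _ ≤ p ^ (β + 1) := Nat.pow_le_pow_left hp2 _
    have hz : N / p ^ (β + 1) = 0 := Nat.div_eq_of_lt hlt
    rw [hw2def]
    simp only
    rw [hz]
    simp [zero_pow (show k ≠ 0 by omega)]
  have hw2sum : Summable w2 := summable_of_ne_finset_zero hw2zero
  have hfin : (∑ β ∈ Finset.range N, hpf f p (β + 1) * ((N / p ^ (β + 1) : ℕ) : ℝ) ^ k)
      = ∑' β, w2 β := (tsum_eq_sum hw2zero).symm
  have htsum1 : ∑' β, w1 β
      = x ^ k * ∑' β : ℕ, hpf f p (β + 1) * ((p : ℝ) ^ ((β + 1) * k))⁻¹ := by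
    rw [← tsum_mul_left]
    apply tsum_congr
    intro β
    rw [hw1def]
    simp only
    rw [div_pow, ← pow_mul, div_eq_mul_inv]
    ring
  have hnorms : Summable (fun β => ‖w2 β - w1 β‖) := by
    apply Summable.of_nonneg_of_le (fun β => norm_nonneg _)
      (fun β => by rw [Real.norm_eq_abs]; exact hptwise β)
      (dom_summable ℓ (2 * k * x ^ (k - 1) * K * (p : ℝ)⁻¹))
  calc |(∑ β ∈ Finset.range N, hpf f p (β + 1) * ((N / p ^ (β + 1) : ℕ) : ℝ) ^ k)
        - x ^ k * (∑' β : ℕ, hpf f p (β + 1) * ((p : ℝ) ^ ((β + 1) * k))⁻¹)|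
      = |∑' β, (w2 β - w1 β)| := by
        rw [hfin, ← htsum1, ← Summable.tsum_sub hw2sum hw1sum]
    _ ≤ ∑' β, ‖w2 β - w1 β‖ := by
        rw [← Real.norm_eq_abs]
        exact norm_tsum_le_tsum_norm hnorms
    _ ≤ ∑' β, (2 * k * x ^ (k - 1) * K * (p : ℝ)⁻¹) * Cseq β :=
        Summable.tsum_le_tsum (fun β => by rw [Real.norm_eq_abs]; exact hptwise β) hnorms
          (dom_summable ℓ _)
    _ = (2 * k * x ^ (k - 1) * K * (p : ℝ)⁻¹) * ∑' β, Cseq β := tsum_mul_left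
    _ = 2 * k * x ^ (k - 1) * K * (∑' β : ℕ, ((β : ℝ) + 1) ^ ℓ * (1 / 2) ^ β) * (p : ℝ)⁻¹ := by
        rw [hCseq]; ring

end PerPrime

section CP

variable (f g : ℕ → ℝ) (lam1 lam2 C0 : ℝ) (s ℓ k : ℕ)

lemma cp_lemmas
    (hs : s ≤ 1) (hlam1 : 0 ≤ lam1) (hlam2 : 0 ≤ lam2) (hC0 : 0 ≤ C0)
    (h1 : f 1 = 0)
    (hfp : ∀ p : ℕ, p.Prime → f p = lam1)
    (hfpa : ∀ p : ℕ, p.Prime → ∀ α : ℕ, 2 ≤ α →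
      f (p ^ α) - f (p ^ (α - 1)) = lam2 * (p : ℝ) ^ s * g α)
    (hg : ∀ α : ℕ, 2 ≤ α → |g α| ≤ C0 * (α : ℝ) ^ ℓ)
    (hk : 2 ≤ k) (p : ℕ) (pp : p.Prime) :
    Summable (fun β : ℕ => hpf f p (β + 1) * ((p : ℝ) ^ ((β + 1) * k))⁻¹)
    ∧ (∑' β : ℕ, hpf f p (β + 1) * ((p : ℝ) ^ ((β + 1) * k))⁻¹)
        = lam1 / ((p : ℕ) : ℝ) ^ k +
            lam2 * ∑' α : ℕ, ((p : ℕ) : ℝ) ^ s * g (α + 2) / ((p : ℕ) : ℝ) ^ ((α + 2) * k)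
    ∧ |∑' β : ℕ, hpf f p (β + 1) * ((p : ℝ) ^ ((β + 1) * k))⁻¹|
        ≤ (lam1 + 2 * lam2 * C0) * (∑' β : ℕ, ((β : ℝ) + 1) ^ ℓ * (1 / 2) ^ β)
            * ((p : ℝ) ^ 2)⁻¹ := by
  have hp2 : 2 ≤ p := pp.two_le
  have hp0R : (0 : ℝ) < p := by positivity
  have hp1R : (1 : ℝ) ≤ p := by exact_mod_cast Nat.one_le_iff_ne_zero.mpr (by omega)
  set K := lam1 + 2 * lam2 * C0 with hK
  have hK0 : 0 ≤ K := by nlinarith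
  set Cseq : ℕ → ℝ := fun β => ((β : ℝ) + 1) ^ ℓ * (1 / 2) ^ β with hCseq
  have hCseq0 : ∀ β, 0 ≤ Cseq β := fun β => by positivity
  have hCl0 : 0 ≤ ∑' β, Cseq β := tsum_nonneg hCseq0
  set u : ℕ → ℝ := fun β => hpf f p (β + 1) * ((p : ℝ) ^ ((β + 1) * k))⁻¹ with hu
  have hbnd : ∀ β, |u β| ≤ (K / (p : ℝ) ^ k) * Cseq β := by
    intro β
    have h := hp_bound f g lam1 lam2 C0 s ℓ hs hlam1 hlam2 hC0 h1 hfp hfpa hg p pp k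
      (by omega) β
    rw [hu]
    simp only
    rw [abs_mul, abs_inv, abs_of_nonneg (by positivity : (0:ℝ) ≤ (p : ℝ) ^ ((β + 1) * k)),
      ← div_eq_mul_inv]
    calc |hpf f p (β + 1)| / (p : ℝ) ^ ((β + 1) * k)
        ≤ K * ((β : ℝ) + 1) ^ ℓ * (1 / 2) ^ β / (p : ℝ) ^ k := h
      _ = (K / (p : ℝ) ^ k) * Cseq β := by rw [hCseq]; ring
  have husum : Summable u := by
    apply Summable.of_norm_bounded (dom_summable ℓ (K / (p : ℝ) ^ k))
    intro β
    rw [Real.norm_eq_abs]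
    exact hbnd β
  refine ⟨husum, ?_, ?_⟩
  · rw [Summable.tsum_eq_zero_add husum]
    congr 1
    · rw [hu]
      simp only
      have : hpf f p (0 + 1) = lam1 := by
        simp only [hpf, zero_add, pow_one, Nat.sub_self, pow_zero, h1, sub_zero]
        exact hfp p pp
      rw [this, div_eq_mul_inv]
      norm_num
    · rw [← tsum_mul_left]
      apply tsum_congr
      intro β
      rw [hu]
      simp only
      have hval : hpf f p (β + 1 + 1) = lam2 * (p : ℝ) ^ s * g (β + 2) := by
        simpa [hpf] using hfpa p pp (β + 2) (by omega)
      rw [hval, div_eq_mul_inv]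
      ring
  · have habs : Summable (fun β => |u β|) := husum.abs
    have hnorm : Summable (fun β => ‖u β‖) :=
      habs.congr (fun β => (Real.norm_eq_abs (u β)).symm)
    calc |∑' β, u β| ≤ ∑' β, ‖u β‖ := norm_tsum_le_tsum_norm hnorm
      _ ≤ ∑' β, (K / (p : ℝ) ^ k) * Cseq β := by
          apply Summable.tsum_le_tsum ?_ hnorm (dom_summable ℓ _)
          intro β
          rw [Real.norm_eq_abs]
          exact hbnd β
      _ = (K / (p : ℝ) ^ k) * ∑' β, Cseq β := tsum_mul_left
      _ ≤ (K / (p : ℝ) ^ 2) * ∑' β, Cseq β := by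
          apply mul_le_mul_of_nonneg_right ?_ hCl0
          apply div_le_div_of_nonneg_left hK0 (by positivity) (pow_le_pow_right₀ hp1R hk)
      _ = K * (∑' β : ℕ, ((β : ℝ) + 1) ^ ℓ * (1 / 2) ^ β) * ((p : ℝ) ^ 2)⁻¹ := by
          rw [hCseq, div_eq_mul_inv]; ring

end CP

theorem stmt9 (s ℓ : ℕ) (hs : s = 0 ∨ s = 1) (lam1 lam2 : ℝ)
    (hlam1 : 0 ≤ lam1) (hlam2 : 0 ≤ lam2)
    (f g : ℕ → ℝ) (C0 : ℝ) (hC0 : 0 ≤ C0)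
    (hadd : ∀ m n : ℕ, 1 ≤ m → 1 ≤ n → Nat.Coprime m n → f (m * n) = f m + f n)
    (hfp : ∀ p : ℕ, p.Prime → f p = lam1)
    (hfpa : ∀ p : ℕ, p.Prime → ∀ α : ℕ, 2 ≤ α →
      f (p ^ α) - f (p ^ (α - 1)) = lam2 * (p : ℝ) ^ s * g α)
    (hg : ∀ α : ℕ, 2 ≤ α → |g α| ≤ C0 * (α : ℝ) ^ ℓ)
    (k : ℕ) (hk : 2 ≤ k) :
    (fun x : ℝ => gcdSum f k x -
      (∑' p : Nat.Primes, (lam1 / ((p : ℕ) : ℝ) ^ k +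
        lam2 * ∑' α : ℕ, ((p : ℕ) : ℝ) ^ s * g (α + 2) / ((p : ℕ) : ℝ) ^ ((α + 2) * k))) * x ^ k)
      =O[atTop] (fun x : ℝ => x ^ (k - 1) * Real.log x ^ (ℓ + 1)) := by
  have hs1 : s ≤ 1 := by rcases hs with h | h <;> omega
  have h1 : f 1 = 0 := f_one_eq_zero f hadd
  set K := lam1 + 2 * lam2 * C0 with hK
  have hK0 : 0 ≤ K := by nlinarith
  have hCsum := Cseq_summable ℓ
  set Cl := ∑' β : ℕ, ((β : ℝ) + 1) ^ ℓ * (1 / 2) ^ β with hCl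
  have hCl0 : 0 ≤ Cl := tsum_nonneg (fun β => by positivity)
  set cp : ℕ → ℝ := fun q => ∑' β : ℕ, hpf f q (β + 1) * ((q : ℝ) ^ ((β + 1) * k))⁻¹ with hcp
  have hcpl := fun (q : ℕ) (hq : q.Prime) =>
    cp_lemmas f g lam1 lam2 C0 s ℓ k hs1 hlam1 hlam2 hC0 h1 hfp hfpa hg hk q hq
  have hF : (∑' p : Nat.Primes, (lam1 / ((p : ℕ) : ℝ) ^ k +
      lam2 * ∑' α : ℕ, ((p : ℕ) : ℝ) ^ s * g (α + 2) / ((p : ℕ) : ℝ) ^ ((α + 2) * k)))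
      = ∑' p : Nat.Primes, cp (p : ℕ) :=
    tsum_congr fun p => ((hcpl p.1 p.2).2.1).symm
  have hcp_abs : ∀ q : ℕ, q.Prime → |cp q| ≤ K * Cl * ((q : ℝ) ^ 2)⁻¹ := by
    intro q hq
    have := (hcpl q hq).2.2
    rw [← hK, ← hCl] at this
    exact this
  have hsq : Summable (fun n : ℕ => (((n : ℝ)) ^ 2)⁻¹) :=
    Real.summable_nat_pow_inv.mpr one_lt_two
  have hsqP : Summable (fun p : Nat.Primes => K * Cl * (((p : ℕ) : ℝ) ^ 2)⁻¹) :=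
    (hsq.comp_injective Nat.Primes.coe_nat_injective).mul_left (K * Cl)
  have hcpP : Summable (fun p : Nat.Primes => cp (p : ℕ)) :=
    Summable.of_norm_bounded hsqP (fun p => by rw [Real.norm_eq_abs]; exact hcp_abs p.1 p.2)
  rw [Asymptotics.isBigO_iff]
  refine ⟨4 * k * K * Cl + 2 * K * Cl, ?_⟩
  filter_upwards [eventually_ge_atTop (3 : ℝ)] with x hx3
  have hx1 : (1 : ℝ) ≤ x := by linarith
  have hx0 : (0 : ℝ) < x := by linarith
  set N := ⌊x⌋₊ with hNdef
  have hN3 : 3 ≤ N := Nat.le_floor (by exact_mod_cast hx3)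
  have hN1 : 1 ≤ N := by omega
  have hNx : (N : ℝ) ≤ x := Nat.floor_le (by linarith)
  have hN0R : (0 : ℝ) < N := by exact_mod_cast Nat.lt_of_lt_of_le Nat.zero_lt_one hN1
  have hxN1 : x < N + 1 := Nat.lt_floor_add_one x
  have hlogx1 : 1 ≤ Real.log x := by
    rw [Real.le_log_iff_exp_le hx0]
    calc Real.exp 1 ≤ 2.7182818286 := Real.exp_one_lt_d9.le
      _ ≤ 3 := by norm_num
      _ ≤ x := hx3
  have hlogN : Real.log N ≤ Real.log x := Real.log_le_log hN0R hNx
  -- notation for per-prime sums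
  set Pfin := (Finset.range (N + 1)).filter Nat.Prime with hPfin
  set Sfin : ℕ → ℝ :=
    fun p => ∑ β ∈ Finset.range N, hpf f p (β + 1) * ((N / p ^ (β + 1) : ℕ) : ℝ) ^ k
    with hSfin
  -- gcd sum formula
  have hgcd : gcdSum f k x = ∑ p ∈ Pfin, Sfin p := by
    unfold gcdSum
    rw [← hNdef, gcdSum_eq f hadd k N (by omega), ← Finset.sum_filter]
  -- split of F
  set sP : Finset Nat.Primes := (Finset.range (N + 1)).subtype Nat.Prime with hsP
  have hsplit := Summable.sum_add_tsum_compl (s := sP) hcpP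
  have hsPsum : (∑ p ∈ sP, cp (p : ℕ)) = ∑ p ∈ Pfin, cp p := by
    rw [hsP, hPfin]
    exact Finset.sum_subtype_eq_sum_filter _
  set T := ∑' q : ↑((sP : Set Nat.Primes)ᶜ), cp ((q : Nat.Primes) : ℕ) with hT
  -- tail bound
  have htailb : |T| ≤ K * Cl / N := by
    set G : ℕ → ℝ := fun m => if N < m then K * Cl * ((m : ℝ) ^ 2)⁻¹ else 0 with hG
    have hGnn : ∀ m, 0 ≤ G m := by
      intro m; rw [hG]; dsimp only; split <;> positivity
    have hGsum : Summable G := by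
      apply Summable.of_nonneg_of_le hGnn ?_ (hsq.mul_left (K * Cl))
      intro m; rw [hG]; dsimp only; split
      · exact le_rfl
      · positivity
    have hsubt : Summable (fun q : ↑((sP : Set Nat.Primes)ᶜ) => cp ((q : Nat.Primes) : ℕ)) :=
      hcpP.subtype _
    have habs2 : Summable (fun q : ↑((sP : Set Nat.Primes)ᶜ) => |cp ((q : Nat.Primes) : ℕ)|) :=
      hsubt.abs
    have hinj : Function.Injective
        (fun q : ↑((sP : Set Nat.Primes)ᶜ) => ((q : Nat.Primes) : ℕ)) :=
      Nat.Primes.coe_nat_injective.comp Subtype.val_injective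
    have hcomp : ∀ q : ↑((sP : Set Nat.Primes)ᶜ),
        |cp ((q : Nat.Primes) : ℕ)| ≤ G ((q : Nat.Primes) : ℕ) := by
      intro q
      have hq : (q : Nat.Primes) ∉ sP := q.2
      have hNq : N < ((q : Nat.Primes) : ℕ) := by
        by_contra h
        apply hq
        show (q : Nat.Primes) ∈ Finset.subtype Nat.Prime (Finset.range (N + 1))
        exact Finset.mem_subtype.mpr (Finset.mem_range.mpr (by omega))
      rw [hG]; dsimp only; rw [if_pos hNq]
      exact hcp_abs _ (q : Nat.Primes).2
    have hnorm2 : Summable (fun q : ↑((sP : Set Nat.Primes)ᶜ) =>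
        ‖cp ((q : Nat.Primes) : ℕ)‖) :=
      habs2.congr (fun q => (Real.norm_eq_abs _).symm)
    calc |T| ≤ ∑' q : ↑((sP : Set Nat.Primes)ᶜ), ‖cp ((q : Nat.Primes) : ℕ)‖ := by
          rw [hT, ← Real.norm_eq_abs]
          exact norm_tsum_le_tsum_norm hnorm2
      _ ≤ ∑' m : ℕ, G m := by
          apply Summable.tsum_le_tsum_of_inj _ hinj (fun c _ => hGnn c) ?_ ?_ hGsum
          · intro q
            rw [Real.norm_eq_abs]
            exact hcomp q
          · exact hnorm2.congr (fun q => Real.norm_eq_abs _)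
      _ = K * Cl * ∑' m : ℕ, (if N < m then ((m : ℝ) ^ 2)⁻¹ else 0) := by
          rw [← tsum_mul_left]
          apply tsum_congr
          intro m
          rw [hG]; dsimp only
          split <;> simp
      _ ≤ K * Cl * (1 / N) := by
          apply mul_le_mul_of_nonneg_left (tail_sq N hN1) (by positivity)
      _ = K * Cl / N := by ring
  -- per-prime bound
  have hΔ : ∀ p ∈ Pfin, |Sfin p - x ^ k * cp p|
      ≤ (2 * k * x ^ (k - 1) * K * Cl) * ((p : ℝ))⁻¹ := by
    intro p hp
    rw [hPfin, Finset.mem_filter] at hp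
    have := per_prime f g lam1 lam2 C0 s ℓ k hs1 hlam1 hlam2 hC0 h1 hfp hfpa hg hk
      x hx1 N hN1 hNx hxN1 p hp.2
    rw [← hK, ← hCl] at this
    calc |Sfin p - x ^ k * cp p|
        = |(∑ β ∈ Finset.range N, hpf f p (β + 1) * ((N / p ^ (β + 1) : ℕ) : ℝ) ^ k)
            - x ^ k * (∑' β : ℕ, hpf f p (β + 1) * ((p : ℝ) ^ ((β + 1) * k))⁻¹)| := by
          rw [hSfin, hcp]
      _ ≤ 2 * k * x ^ (k - 1) * K * Cl * (p : ℝ)⁻¹ := this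
      _ = (2 * k * x ^ (k - 1) * K * Cl) * (p : ℝ)⁻¹ := by ring
  -- harmonic bound
  have hH : ∑ p ∈ Pfin, ((p : ℝ))⁻¹ ≤ 1 + Real.log N := by
    calc ∑ p ∈ Pfin, ((p : ℝ))⁻¹ ≤ ∑ m ∈ Finset.Icc 1 N, ((m : ℝ))⁻¹ := by
          apply Finset.sum_le_sum_of_subset_of_nonneg
          · intro p hp
            rw [hPfin, Finset.mem_filter, Finset.mem_range] at hp
            rw [Finset.mem_Icc]
            exact ⟨hp.2.one_lt.le, by omega⟩
          · intro m _ _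
            positivity
      _ = ((harmonic N : ℚ) : ℝ) := by
          rw [harmonic_eq_sum_Icc]
          push_cast
          rfl
      _ ≤ 1 + Real.log N := harmonic_le_one_add_log N
  -- final assembly
  have hdecomp : gcdSum f k x -
      (∑' p : Nat.Primes, (lam1 / ((p : ℕ) : ℝ) ^ k +
        lam2 * ∑' α : ℕ, ((p : ℕ) : ℝ) ^ s * g (α + 2) / ((p : ℕ) : ℝ) ^ ((α + 2) * k))) * x ^ k
      = (∑ p ∈ Pfin, (Sfin p - x ^ k * cp p)) - x ^ k * T := by
    rw [hF, ← hsplit, hsPsum, hgcd, Finset.sum_sub_distrib, ← Finset.mul_sum]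
    ring
  rw [Real.norm_eq_abs, hdecomp]
  have hxk1 : (0 : ℝ) ≤ x ^ (k - 1) := by positivity
  have step1 : |(∑ p ∈ Pfin, (Sfin p - x ^ k * cp p)) - x ^ k * T|
      ≤ (2 * k * x ^ (k - 1) * K * Cl) * (1 + Real.log x) + x ^ k * (K * Cl / N) := by
    calc |(∑ p ∈ Pfin, (Sfin p - x ^ k * cp p)) - x ^ k * T|
        ≤ |∑ p ∈ Pfin, (Sfin p - x ^ k * cp p)| + |x ^ k * T| := abs_sub _ _
      _ ≤ (∑ p ∈ Pfin, |Sfin p - x ^ k * cp p|) + x ^ k * |T| := by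
          apply add_le_add (Finset.abs_sum_le_sum_abs _ _)
          rw [abs_mul, abs_of_nonneg (by positivity : (0:ℝ) ≤ x ^ k)]
      _ ≤ (∑ p ∈ Pfin, (2 * k * x ^ (k - 1) * K * Cl) * ((p : ℝ))⁻¹)
            + x ^ k * (K * Cl / N) := by
          apply add_le_add (Finset.sum_le_sum hΔ)
          apply mul_le_mul_of_nonneg_left htailb (by positivity)
      _ = (2 * k * x ^ (k - 1) * K * Cl) * (∑ p ∈ Pfin, ((p : ℝ))⁻¹)
            + x ^ k * (K * Cl / N) := by rw [← Finset.mul_sum]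
      _ ≤ (2 * k * x ^ (k - 1) * K * Cl) * (1 + Real.log x)
            + x ^ k * (K * Cl / N) := by
          apply add_le_add_left
          apply mul_le_mul_of_nonneg_left ?_ (by positivity)
          calc ∑ p ∈ Pfin, ((p : ℝ))⁻¹ ≤ 1 + Real.log N := hH
            _ ≤ 1 + Real.log x := by linarith
  have hterm2 : x ^ k * (K * Cl / N) ≤ 2 * K * Cl * x ^ (k - 1) := by
    have hxk : x ^ k = x ^ (k - 1) * x := by
      rw [← pow_succ]
      congr 1
      omega
    rw [hxk]
    have hxN2 : x ≤ 2 * N := by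
      have : (1 : ℝ) ≤ N := by exact_mod_cast hN1
      linarith
    calc x ^ (k - 1) * x * (K * Cl / N) = (x ^ (k - 1) * K * Cl) * (x / N) := by ring
      _ ≤ (x ^ (k - 1) * K * Cl) * 2 := by
          apply mul_le_mul_of_nonneg_left ?_ (by positivity)
          rw [div_le_iff₀ hN0R]
          linarith
      _ = 2 * K * Cl * x ^ (k - 1) := by ring
  have step2 : (2 * k * x ^ (k - 1) * K * Cl) * (1 + Real.log x) + x ^ k * (K * Cl / N)
      ≤ (4 * k * K * Cl + 2 * K * Cl) * (x ^ (k - 1) * Real.log x ^ (ℓ + 1)) := by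
    have hlog_pow : Real.log x ≤ Real.log x ^ (ℓ + 1) :=
      le_self_pow₀ hlogx1 (Nat.succ_ne_zero ℓ)
    have h1log : 1 + Real.log x ≤ 2 * Real.log x := by linarith
    have hkR : (0 : ℝ) ≤ (k : ℝ) := by positivity
    calc (2 * k * x ^ (k - 1) * K * Cl) * (1 + Real.log x) + x ^ k * (K * Cl / N)
        ≤ (2 * k * x ^ (k - 1) * K * Cl) * (2 * Real.log x) + 2 * K * Cl * x ^ (k - 1) := by
          apply add_le_add ?_ hterm2
          apply mul_le_mul_of_nonneg_left h1log (by positivity)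
      _ = (4 * k * K * Cl) * (x ^ (k - 1) * Real.log x)
            + (2 * K * Cl) * x ^ (k - 1) := by ring
      _ ≤ (4 * k * K * Cl) * (x ^ (k - 1) * Real.log x ^ (ℓ + 1))
            + (2 * K * Cl) * (x ^ (k - 1) * Real.log x ^ (ℓ + 1)) := by
          apply add_le_add
          · apply mul_le_mul_of_nonneg_left ?_ (by positivity)
            apply mul_le_mul_of_nonneg_left hlog_pow hxk1
          · calc (2 * K * Cl) * x ^ (k - 1)
                = (2 * K * Cl) * (x ^ (k - 1) * 1) := by ring
              _ ≤ (2 * K * Cl) * (x ^ (k - 1) * Real.log x ^ (ℓ + 1)) := by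
                  apply mul_le_mul_of_nonneg_left ?_ (by positivity)
                  apply mul_le_mul_of_nonneg_left ?_ hxk1
                  calc (1 : ℝ) ≤ Real.log x := hlogx1
                    _ ≤ Real.log x ^ (ℓ + 1) := hlog_pow
      _ = (4 * k * K * Cl + 2 * K * Cl) * (x ^ (k - 1) * Real.log x ^ (ℓ + 1)) := by ring
  calc |(∑ p ∈ Pfin, (Sfin p - x ^ k * cp p)) - x ^ k * T|
      ≤ (4 * k * K * Cl + 2 * K * Cl) * (x ^ (k - 1) * Real.log x ^ (ℓ + 1)) :=
        step1.trans step2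
    _ = (4 * k * K * Cl + 2 * K * Cl) * ‖x ^ (k - 1) * Real.log x ^ (ℓ + 1)‖ := by
        rw [Real.norm_eq_abs, abs_of_nonneg]
        apply mul_nonneg hxk1
        apply pow_nonneg
        linarith
end

section
/- Let r ≥ 0 and k ≥ 1 be integers with k ≥ r+2. Then, as x → ∞, ∑_{p prime, p ≤ x} p^r ⌊x/p⌋^k = x^k ∑_{p prime} p^{r−k} + O( x^{k−1} (log log x)^{κ} ), where κ = 1 if r = k−2 and κ = 0 otherwise (i.e., the error term is O(x^{k−1} log log x) when r = k−2 and O(x^{k−1}) when r ≤ k−3). -/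
open Filter Finset MeasureTheory

noncomputable def F (r k : ℕ) (n : ℕ) : ℝ := if n.Prime then (n:ℝ)^r / (n:ℝ)^k else 0

-- Lemma 1: dyadic prime count
lemma dyadic_count (j : ℕ) :
    j * ((Finset.Ioc (2^j) (2^(j+1))).filter Nat.Prime).card ≤ 2^(j+2) := by
  set s := (Finset.Ioc (2^j) (2^(j+1))).filter Nat.Prime with hs
  have h1 : (2^j) ^ s.card ≤ ∏ p ∈ s, p := by
    apply Finset.pow_card_le_prod
    intro p hp
    exact le_of_lt (Finset.mem_Ioc.mp (Finset.mem_filter.mp hp).1).1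
  have h2 : ∏ p ∈ s, p ≤ primorial (2^(j+1)) := by
    apply Finset.prod_le_prod_of_subset_of_one_le'
    · intro p hp
      simp only [hs, Finset.mem_filter, Finset.mem_Ioc, Finset.mem_range] at hp ⊢
      exact ⟨Nat.lt_succ_of_le hp.1.2, hp.2⟩
    · intro p hp _
      exact Nat.one_le_iff_ne_zero.mpr (by
        rintro rfl
        exact Nat.not_prime_zero (Finset.mem_filter.mp hp).2)
  have h3 : primorial (2^(j+1)) ≤ 4 ^ (2^(j+1)) := primorial_le_4_pow _
  have h4 : (2:ℕ) ^ (j * s.card) ≤ 2 ^ (2^(j+2)) := by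
    calc (2:ℕ) ^ (j * s.card) = (2^j)^s.card := by rw [pow_mul]
    _ ≤ primorial (2^(j+1)) := le_trans h1 h2
    _ ≤ 4 ^ (2^(j+1)) := h3
    _ = 2 ^ (2^(j+2)) := by
        rw [show (4:ℕ) = 2^2 by norm_num, ← pow_mul, pow_succ]
        ring_nf
  exact (Nat.pow_le_pow_iff_right one_lt_two).mp h4

lemma dyadic_recip (j : ℕ) (hj : 1 ≤ j) :
    ∑ p ∈ (Finset.Ioc (2^j) (2^(j+1))).filter Nat.Prime, (1:ℝ)/p ≤ 4 / j := by
  set s := (Finset.Ioc (2^j) (2^(j+1))).filter Nat.Prime with hs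
  have h1 : ∑ p ∈ s, (1:ℝ)/p ≤ s.card • (1/(2:ℝ)^j) := by
    apply Finset.sum_le_card_nsmul
    intro p hp
    have hp2 : (2:ℕ)^j ≤ p := (Finset.mem_Ioc.mp (Finset.mem_filter.mp hp).1).1.le
    have hp2' : (2:ℝ)^j ≤ p := by exact_mod_cast hp2
    exact one_div_le_one_div_of_le (by positivity) hp2'
  have hcount : (j:ℝ) * s.card ≤ 2^(j+2) := by exact_mod_cast dyadic_count j
  have hj' : (0:ℝ) < j := by exact_mod_cast hj
  rw [nsmul_eq_mul] at h1
  calc ∑ p ∈ s, (1:ℝ)/p ≤ s.card * (1/2^j) := h1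
    _ ≤ 4 / j := by
        rw [mul_one_div, div_le_div_iff₀ (by positivity) hj']
        calc (s.card:ℝ) * j = j * s.card := by ring
          _ ≤ 2^(j+2) := hcount
          _ = 4 * 2^j := by ring

lemma mertens_pow2 (J : ℕ) :
    ∑ p ∈ (Finset.Icc 1 (2^(J+1))).filter Nat.Prime, (1:ℝ)/p
      ≤ 1/2 + ∑ j ∈ Finset.Icc 1 J, 4/(j:ℝ) := by
  induction J with
  | zero =>
    norm_num
    have : (Finset.Icc 1 2).filter Nat.Prime = {2} := by decide
    rw [this]
    norm_num
  | succ J ih =>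
    have hsplit : Finset.Icc 1 (2^(J+2)) = Finset.Icc 1 (2^(J+1)) ∪ Finset.Ioc (2^(J+1)) (2^(J+2)) := by
      ext n
      simp only [Finset.mem_Icc, Finset.mem_union, Finset.mem_Ioc]
      have h1 : (2:ℕ)^(J+1) ≤ 2^(J+2) := Nat.pow_le_pow_right (by norm_num) (by omega)
      have h2 : (1:ℕ) ≤ 2^(J+1) := Nat.one_le_two_pow
      generalize (2:ℕ)^(J+1) = a at *
      generalize (2:ℕ)^(J+2) = b at *
      omega
    have hdisj : Disjoint ((Finset.Icc 1 (2^(J+1))).filter Nat.Prime)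
        ((Finset.Ioc (2^(J+1)) (2^(J+2))).filter Nat.Prime) := by
      apply Finset.disjoint_filter_filter
      rw [Finset.disjoint_left]
      intro n h1 h2
      simp only [Finset.mem_Icc, Finset.mem_Ioc] at h1 h2
      omega
    rw [show J + 1 + 1 = J + 2 by omega, hsplit, Finset.filter_union,
      Finset.sum_union hdisj]
    have hblock := dyadic_recip (J+1) (by omega)
    rw [Finset.sum_Icc_succ_top (by omega : 1 ≤ J + 1)]
    have : (2:ℕ)^(J+1+1) = 2^(J+2) := by norm_num
    rw [this] at hblock
    push_cast
    push_cast at hblock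
    linarith [ih]

lemma mertens_bound (x : ℝ) (hx : 16 ≤ x) :
    ∑ p ∈ (Finset.Icc 1 ⌊x⌋₊).filter Nat.Prime, (1:ℝ)/p ≤ 13 * Real.log (Real.log x) := by
  have hx0 : (0:ℝ) < x := by linarith
  set N := ⌊x⌋₊ with hN
  have hN16 : 16 ≤ N := Nat.le_floor (by exact_mod_cast hx)
  set J := Nat.log 2 N with hJ
  have hJ4 : 4 ≤ J := by
    rw [hJ, Nat.le_log_iff_pow_le one_lt_two (by omega)]
    norm_num; omega
  have hNle : N ≤ 2^(J+1) := (Nat.lt_pow_succ_log_self one_lt_two N).le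
  have hpowle : (2:ℕ)^J ≤ N := Nat.pow_log_le_self 2 (by omega)
  -- step 1: compare with dyadic sum
  have h1 : ∑ p ∈ (Finset.Icc 1 N).filter Nat.Prime, (1:ℝ)/p
      ≤ ∑ p ∈ (Finset.Icc 1 (2^(J+1))).filter Nat.Prime, (1:ℝ)/p := by
    apply Finset.sum_le_sum_of_subset_of_nonneg
    · apply Finset.filter_subset_filter
      exact Finset.Icc_subset_Icc le_rfl hNle
    · intro p _ _; positivity
  -- step 2: harmonic bound
  have h2 : ∑ j ∈ Finset.Icc 1 J, 4/(j:ℝ) ≤ 4 * (1 + Real.log J) := by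
    have : ∑ j ∈ Finset.Icc 1 J, 4/(j:ℝ) = 4 * ((harmonic J : ℚ) : ℝ) := by
      rw [harmonic_eq_sum_Icc]
      push_cast
      rw [Finset.mul_sum]
      apply Finset.sum_congr rfl
      intro j _; rw [div_eq_mul_inv]
    rw [this]
    have := harmonic_le_one_add_log J
    nlinarith [this]
  -- step 3: J ≤ 2 log x
  have hlog2 : (0.6931471803 : ℝ) < Real.log 2 := Real.log_two_gt_d9
  have hlogx : Real.log x ≥ 4 * Real.log 2 := by
    calc 4 * Real.log 2 = Real.log (2^(4:ℕ)) := by rw [Real.log_pow]; push_cast; ring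
      _ = Real.log 16 := by norm_num
      _ ≤ Real.log x := Real.log_le_log (by norm_num) hx
  have hJle : (J:ℝ) ≤ 2 * Real.log x := by
    have hp : (2:ℝ)^J ≤ x := by
      have : ((2^J : ℕ) : ℝ) ≤ (N:ℝ) := by exact_mod_cast hpowle
      have hNx : (N:ℝ) ≤ x := Nat.floor_le hx0.le
      push_cast at this
      linarith
    have := Real.log_le_log (by positivity) hp
    rw [Real.log_pow] at this
    nlinarith [this, hlog2]
  have hJlog : Real.log J ≤ Real.log 2 + Real.log (Real.log x) := by
    have hJpos : (0:ℝ) < J := by exact_mod_cast (by omega : 0 < J)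
    calc Real.log J ≤ Real.log (2 * Real.log x) := Real.log_le_log hJpos hJle
      _ = Real.log 2 + Real.log (Real.log x) := Real.log_mul (by norm_num) (by nlinarith)
  -- step 4: loglog x ≥ 1
  have hLL : 1 ≤ Real.log (Real.log x) := by
    have he : Real.exp 1 < 2.7182818286 := Real.exp_one_lt_d9
    rw [Real.le_log_iff_exp_le (by nlinarith)]
    nlinarith
  have h0 := mertens_pow2 J
  calc ∑ p ∈ (Finset.Icc 1 N).filter Nat.Prime, (1:ℝ)/p
      ≤ 1/2 + ∑ j ∈ Finset.Icc 1 J, 4/(j:ℝ) := le_trans h1 h0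
    _ ≤ 1/2 + 4 * (1 + Real.log J) := by linarith
    _ ≤ 1/2 + 4 * (1 + Real.log 2 + Real.log (Real.log x)) := by linarith
    _ ≤ 13 * Real.log (Real.log x) := by nlinarith [hLL, hlog2, Real.log_two_lt_d9]

section
variable {r k : ℕ}

lemma F_nonneg (n : ℕ) : 0 ≤ F r k n := by
  unfold F; split <;> positivity

lemma F_le (hk : r + 2 ≤ k) (n : ℕ) : F r k n ≤ ((n:ℝ)^2)⁻¹ := by
  unfold F
  split
  · rename_i hp
    have h2 : (2:ℝ) ≤ n := by exact_mod_cast hp.two_le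
    have hn0 : (0:ℝ) < n := by linarith
    rw [div_le_iff₀ (by positivity), ← mul_le_mul_iff_of_pos_left (by positivity : (0:ℝ) < (n:ℝ)^2)]
    calc (n:ℝ)^2 * (n:ℝ)^r = (n:ℝ)^(r+2) := by ring
      _ ≤ (n:ℝ)^k := pow_le_pow_right₀ (by linarith) hk
      _ = (n:ℝ)^2 * (((n:ℝ)^2)⁻¹ * (n:ℝ)^k) := by
          field_simp
  · positivity

lemma F_summable (hk : r + 2 ≤ k) : Summable (F r k) := by
  apply Summable.of_nonneg_of_le F_nonneg (F_le hk)
  exact (Real.summable_nat_pow_inv).mpr one_lt_two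

lemma F_tsum_eq (hk : r + 2 ≤ k) :
    (∑' p : Nat.Primes, ((p : ℕ) : ℝ) ^ r / ((p : ℕ) : ℝ) ^ k) = ∑' n : ℕ, F r k n := by
  have h1 : (∑' p : Nat.Primes, ((p : ℕ) : ℝ) ^ r / ((p : ℕ) : ℝ) ^ k)
      = ∑' n : ℕ, Set.indicator {m : ℕ | m.Prime} (fun n : ℕ => (n:ℝ)^r/(n:ℝ)^k) n :=
    tsum_subtype {m : ℕ | m.Prime} (fun n : ℕ => (n:ℝ)^r/(n:ℝ)^k)
  rw [h1]
  apply tsum_congr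
  intro n
  rw [Set.indicator_apply]
  unfold F
  simp [Set.mem_setOf_eq]

lemma F_partial (N : ℕ) :
    ∑ p ∈ (Finset.Icc 1 N).filter Nat.Prime, (p:ℝ)^r / (p:ℝ)^k
      = ∑ n ∈ Finset.range (N+1), F r k n := by
  rw [Finset.sum_filter]
  apply Finset.sum_subset
  · intro n hn
    simp only [Finset.mem_Icc, Finset.mem_range] at hn ⊢
    omega
  · intro n hn hn'
    simp only [Finset.mem_Icc, Finset.mem_range] at hn hn'
    have : n = 0 := by omega
    subst this
    simp [F, Nat.not_prime_zero]

lemma F_tail (hk : r + 2 ≤ k) (N : ℕ) :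
    (∑' n : ℕ, F r k n) - ∑ n ∈ Finset.range (N+1), F r k n ≤ 2/(N+1) := by
  rw [← Summable.sum_add_tsum_nat_add (N+1) (F_summable hk)]
  have htail : (∑' n : ℕ, F r k (n + (N+1))) ≤ 2/(N+1) := by
    have hsum : Summable (fun n => F r k (n + (N+1))) := (F_summable hk).comp_injective (add_left_injective _)
    apply Summable.tsum_le_of_sum_le hsum
    intro s
    obtain ⟨M, hM⟩ := s.exists_nat_subset_range
    calc ∑ n ∈ s, F r k (n + (N+1)) ≤ ∑ n ∈ Finset.range M, F r k (n + (N+1)) :=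
          Finset.sum_le_sum_of_subset_of_nonneg hM (fun n _ _ => F_nonneg _)
      _ ≤ ∑ n ∈ Finset.range M, (((n + (N+1) : ℕ):ℝ)^2)⁻¹ :=
          Finset.sum_le_sum (fun n _ => F_le hk _)
      _ = ∑ i ∈ Finset.Ioo N (N+1+M), ((i:ℝ)^2)⁻¹ := by
          rw [← Finset.Ico_add_one_left_eq_Ioo, Finset.sum_Ico_eq_sum_range]
          apply Finset.sum_congr (by congr 1; omega)
          intro n _
          have hh : n + (N+1) = N+1+n := by omega
          rw [hh]
      _ ≤ 2/(N+1) := by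
          have := sum_Ioo_inv_sq_le (α := ℝ) N (N+1+M)
          push_cast at this ⊢
          exact this
  linarith
end

lemma pow_diff_le (m : ℕ) (a b : ℝ) (hb : 0 ≤ b) (hba : b ≤ a) :
    a^m - b^m ≤ m * a^(m-1) * (a - b) := by
  induction m with
  | zero => simp
  | succ n ih =>
    have ha : 0 ≤ a := hb.trans hba
    have hbn : b^n ≤ a^n := pow_le_pow_left₀ hb hba n
    calc a^(n+1) - b^(n+1) = a * (a^n - b^n) + b^n * (a - b) := by ring
      _ ≤ a * (n * a^(n-1) * (a-b)) + a^n * (a - b) := by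
          have h1 : a * (a^n - b^n) ≤ a * (n * a^(n-1) * (a-b)) :=
            mul_le_mul_of_nonneg_left ih ha
          have h2 : b^n * (a-b) ≤ a^n * (a-b) :=
            mul_le_mul_of_nonneg_right hbn (by linarith)
          linarith
      _ ≤ (n+1) * a^n * (a - b) := by
          rcases Nat.eq_zero_or_pos n with hn | hn
          · subst hn; simp
          · have : a * (n * a^(n-1) * (a-b)) = n * (a * a^(n-1)) * (a-b) := by ring
            rw [this, ← pow_succ']
            have : n - 1 + 1 = n := by omega
            rw [this]
            push_cast
            ring_nf
            rfl
      _ = ((n+1:ℕ)) * a^(n+1-1) * (a-b) := by push_cast; ring_nf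

lemma loglog_ge_one (x : ℝ) (hx : 16 ≤ x) : 1 ≤ Real.log (Real.log x) := by
  have hlog2 : (0.6931471803 : ℝ) < Real.log 2 := Real.log_two_gt_d9
  have hlogx : Real.log x ≥ 4 * Real.log 2 := by
    calc 4 * Real.log 2 = Real.log (2^(4:ℕ)) := by rw [Real.log_pow]; push_cast; ring
      _ = Real.log 16 := by norm_num
      _ ≤ Real.log x := Real.log_le_log (by norm_num) hx
  have he : Real.exp 1 < 2.7182818286 := Real.exp_one_lt_d9
  rw [Real.le_log_iff_exp_le (by nlinarith)]
  nlinarith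



theorem stmt14 (r k : ℕ) (hk : r + 2 ≤ k) :
    (fun x : ℝ =>
      (∑ p ∈ Finset.filter Nat.Prime (Finset.Icc 1 ⌊x⌋₊),
        (p : ℝ) ^ r * (⌊x / (p : ℝ)⌋₊ : ℝ) ^ k) -
      x ^ k * ∑' p : Nat.Primes, ((p : ℕ) : ℝ) ^ r / ((p : ℕ) : ℝ) ^ k)
      =O[atTop] (fun x : ℝ =>
        x ^ (k - 1) * Real.log (Real.log x) ^ (if r + 2 = k then 1 else 0)) := by
  rw [Asymptotics.isBigO_iff]
  refine ⟨13*k + 2, ?_⟩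
  filter_upwards [eventually_ge_atTop (16:ℝ)] with x hx
  have hx0 : (0:ℝ) < x := by linarith
  have hx1 : (1:ℝ) ≤ x := by linarith
  set N := ⌊x⌋₊ with hN
  have hN1 : 1 ≤ N := Nat.le_floor (by exact_mod_cast hx1)
  set s := (Finset.Icc 1 N).filter Nat.Prime with hs
  set T := ∑' p : Nat.Primes, ((p : ℕ) : ℝ) ^ r / ((p : ℕ) : ℝ) ^ k with hT
  set L := Real.log (Real.log x) ^ (if r + 2 = k then 1 else 0) with hL
  have hLL : 1 ≤ Real.log (Real.log x) := loglog_ge_one x hx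
  have hL1 : 1 ≤ L := by
    rw [hL]; split
    · simpa using hLL
    · norm_num
  have hL0 : 0 ≤ L := by linarith
  have hxk1 : (0:ℝ) ≤ x^(k-1) := by positivity
  -- basic facts about primes in s
  have hps : ∀ p ∈ s, p.Prime ∧ 1 ≤ p ∧ (p:ℝ) ≤ x ∧ (0:ℝ) < p := by
    intro p hp
    rw [hs, Finset.mem_filter, Finset.mem_Icc] at hp
    have hpx : (p:ℝ) ≤ x := le_trans (by exact_mod_cast hp.1.2) (Nat.floor_le hx0.le)
    exact ⟨hp.2, hp.1.1, hpx, by exact_mod_cast hp.2.pos⟩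
  -- sum bound on p^(r+1)/p^k
  have hB : ∑ p ∈ s, (p:ℝ)^(r+1)/(p:ℝ)^k ≤ 13 * L := by
    by_cases hcase : r + 2 = k
    · have : ∀ p ∈ s, (p:ℝ)^(r+1)/(p:ℝ)^k = 1/p := by
        intro p hp
        obtain ⟨hpp, -, -, hp0⟩ := hps p hp
        have hthis : (p:ℝ)^k = (p:ℝ)^(r+1) * p := by
          rw [← hcase, show r+2 = (r+1)+1 by omega, pow_succ]
        rw [hthis, div_mul_eq_div_div, div_self (by positivity)]
      rw [Finset.sum_congr rfl this]
      have := mertens_bound x hx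
      rw [hL, if_pos hcase, pow_one]
      exact this
    · have hstep : ∀ p ∈ s, (p:ℝ)^(r+1)/(p:ℝ)^k ≤ ((p:ℝ)^2)⁻¹ := by
        intro p hp
        obtain ⟨hpp, -, -, hp0⟩ := hps p hp
        have hkk : k = (r+1) + (k-r-1) := by omega
        have hsp : (p:ℝ)^k = (p:ℝ)^(r+1) * (p:ℝ)^(k-r-1) := by
          conv_lhs => rw [hkk]
          rw [pow_add]
        rw [hsp]
        have h1 : (p:ℝ)^(r+1)/((p:ℝ)^(r+1) * (p:ℝ)^(k-r-1)) = ((p:ℝ)^(k-r-1))⁻¹ := by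
          field_simp
        rw [h1]
        apply inv_anti₀ (by positivity)
        apply pow_le_pow_right₀ (by exact_mod_cast hpp.one_lt.le)
        omega
      calc ∑ p ∈ s, (p:ℝ)^(r+1)/(p:ℝ)^k ≤ ∑ p ∈ s, ((p:ℝ)^2)⁻¹ :=
            Finset.sum_le_sum hstep
        _ ≤ ∑ i ∈ Finset.Ioo 1 (N+1), ((i:ℝ)^2)⁻¹ := by
            apply Finset.sum_le_sum_of_subset_of_nonneg
            · intro p hp
              rw [hs, Finset.mem_filter, Finset.mem_Icc] at hp
              rw [Finset.mem_Ioo]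
              exact ⟨hp.2.one_lt, by omega⟩
            · intro i _ _; positivity
        _ ≤ 2/(1+1) := by
            have := sum_Ioo_inv_sq_le (α := ℝ) 1 (N+1)
            push_cast at this ⊢
            exact this
        _ ≤ 13 * L := by rw [hL, if_neg hcase, pow_zero]; norm_num
  -- step A: floor vs exact
  have hSP : 0 ≤ (∑ p ∈ s, (p:ℝ)^r * (x/p)^k) - (∑ p ∈ s, (p:ℝ)^r * (⌊x/(p:ℝ)⌋₊:ℝ)^k) ∧
      (∑ p ∈ s, (p:ℝ)^r * (x/p)^k) - (∑ p ∈ s, (p:ℝ)^r * (⌊x/(p:ℝ)⌋₊:ℝ)^k)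
        ≤ k * x^(k-1) * (13 * L) := by
    rw [← Finset.sum_sub_distrib]
    constructor
    · apply Finset.sum_nonneg
      intro p hp
      obtain ⟨-, -, hpx, hp0⟩ := hps p hp
      have hfl : (⌊x/(p:ℝ)⌋₊:ℝ) ≤ x/p := Nat.floor_le (by positivity)
      have : (⌊x/(p:ℝ)⌋₊:ℝ)^k ≤ (x/p)^k := pow_le_pow_left₀ (by positivity) hfl k
      nlinarith [pow_nonneg hp0.le r]
    · have hterm : ∀ p ∈ s, (p:ℝ)^r * (x/p)^k - (p:ℝ)^r * (⌊x/(p:ℝ)⌋₊:ℝ)^k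
          ≤ k * x^(k-1) * ((p:ℝ)^(r+1)/(p:ℝ)^k) := by
        intro p hp
        obtain ⟨-, -, hpx, hp0⟩ := hps p hp
        set a := x/(p:ℝ) with ha
        set b := (⌊x/(p:ℝ)⌋₊:ℝ) with hb
        have hb0 : 0 ≤ b := by positivity
        have hba : b ≤ a := Nat.floor_le (by positivity)
        have hab1 : a - b ≤ 1 := by
          have := Nat.lt_floor_add_one a
          rw [hb]; linarith
        have hd := pow_diff_le k a b hb0 hba
        have ha0 : 0 ≤ a := by positivity
        have hak : (0:ℝ) ≤ a^(k-1) := by positivity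
        have h2 : a^k - b^k ≤ k * a^(k-1) := by
          have h5 : (k:ℝ) * a^(k-1) * (a-b) ≤ (k:ℝ) * a^(k-1) * 1 :=
            mul_le_mul_of_nonneg_left hab1 (by positivity)
          rw [mul_one] at h5
          linarith [hd, h5]
        have h3 : (p:ℝ)^r * (a^k - b^k) ≤ (p:ℝ)^r * (k * a^(k-1)) :=
          mul_le_mul_of_nonneg_left h2 (by positivity)
        have h4 : (p:ℝ)^r * (k * a^(k-1)) = k * x^(k-1) * ((p:ℝ)^(r+1)/(p:ℝ)^k) := by
          rw [ha, div_pow]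
          have hk1 : k - 1 + 1 = k := by omega
          have hpk : (p:ℝ)^k = (p:ℝ)^(k-1) * p := by rw [← pow_succ, hk1]
          have hpr : (p:ℝ)^(r+1) = (p:ℝ)^r * p := by rw [pow_succ]
          rw [hpk, hpr]
          field_simp
        rw [← h4]
        linarith [h3]
      calc ∑ p ∈ s, ((p:ℝ)^r * (x/p)^k - (p:ℝ)^r * (⌊x/(p:ℝ)⌋₊:ℝ)^k)
          ≤ ∑ p ∈ s, k * x^(k-1) * ((p:ℝ)^(r+1)/(p:ℝ)^k) := Finset.sum_le_sum hterm
        _ = k * x^(k-1) * ∑ p ∈ s, (p:ℝ)^(r+1)/(p:ℝ)^k := by rw [Finset.mul_sum]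
        _ ≤ k * x^(k-1) * (13 * L) := by
            apply mul_le_mul_of_nonneg_left hB
            positivity
  -- P = Q
  have hPQ : ∑ p ∈ s, (p:ℝ)^r * (x/p)^k = x^k * ∑ p ∈ s, (p:ℝ)^r/(p:ℝ)^k := by
    rw [Finset.mul_sum]
    apply Finset.sum_congr rfl
    intro p hp
    obtain ⟨-, -, -, hp0⟩ := hps p hp
    rw [div_pow]
    field_simp
  -- step C : tail
  have hQG : 0 ≤ x^k * T - x^k * ∑ p ∈ s, (p:ℝ)^r/(p:ℝ)^k ∧
      x^k * T - x^k * ∑ p ∈ s, (p:ℝ)^r/(p:ℝ)^k ≤ 2 * x^(k-1) := by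
    have hpart : ∑ p ∈ s, (p:ℝ)^r/(p:ℝ)^k = ∑ n ∈ Finset.range (N+1), F r k n := F_partial N
    have htsum : T = ∑' n : ℕ, F r k n := F_tsum_eq hk
    have htail := F_tail hk (r := r) (k := k) N
    have hple : ∑ n ∈ Finset.range (N+1), F r k n ≤ ∑' n : ℕ, F r k n :=
      Summable.sum_le_tsum _ (fun n _ => F_nonneg n) (F_summable hk)
    have hNx : x ≤ (N:ℝ) + 1 := by
      have := Nat.lt_floor_add_one x
      push_cast
      linarith
    have h2x : 2/((N:ℝ)+1) ≤ 2/x := by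
      apply div_le_div_of_nonneg_left (by norm_num) hx0 hNx
    have hxk : x^k * (2/x) = 2 * x^(k-1) := by
      have hk1 : k - 1 + 1 = k := by omega
      rw [← hk1, pow_succ]
      field_simp
      ring_nf
      rw [Nat.add_sub_cancel_left]
    constructor
    · rw [htsum, hpart, ← mul_sub]
      apply mul_nonneg (by positivity)
      linarith
    · rw [htsum, hpart, ← mul_sub]
      calc x^k * ((∑' n : ℕ, F r k n) - ∑ n ∈ Finset.range (N+1), F r k n)
          ≤ x^k * (2/((N:ℝ)+1)) := by
            apply mul_le_mul_of_nonneg_left _ (by positivity)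
            exact_mod_cast htail
        _ ≤ x^k * (2/x) := mul_le_mul_of_nonneg_left h2x (by positivity)
        _ = 2 * x^(k-1) := hxk
  -- assemble
  rw [Real.norm_eq_abs, Real.norm_eq_abs, abs_of_nonneg (by positivity : (0:ℝ) ≤ x^(k-1) * L)]
  rw [abs_le]
  obtain ⟨hSP1, hSP2⟩ := hSP
  obtain ⟨hQG1, hQG2⟩ := hQG
  rw [hPQ] at hSP1 hSP2
  have hxkL : x^(k-1) ≤ x^(k-1) * L := le_mul_of_one_le_right hxk1 hL1
  constructor
  · push_cast
    nlinarith [hSP2, hQG1, hxkL]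
  · push_cast
    nlinarith [hSP1, hQG2, hxkL]
end

section
/- Let m, ℓ be nonnegative integers with m − ℓ ≥ 2, and let k ≥ 1 be an integer with m − k − ℓ ≥ 1. Then the k-fold series ∑_{n₁=1}^∞ ⋯ ∑_{n_k=1}^∞ min(1/n₁^m, …, 1/n_k^m) · max(n₁^ℓ, …, n_k^ℓ) converges and equals ∑_{j=0}^{k−1} (−1)^{k−1−j} binom(k,j) ζ(m−ℓ−j), where ζ is the Riemann zeta function. -/
open Filter Finset

/-- The Riemann zeta function at a real argument (real-valued). -/
noncomputable def zetaR (x : ℝ) : ℝ := (riemannZeta (x : ℂ)).re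

lemma zetaR_hasSum {p : ℕ} (hp : 2 ≤ p) :
    HasSum (fun n : ℕ => 1 / ((n : ℝ) + 1) ^ p) (zetaR p) := by
  have hsum : Summable (fun n : ℕ => 1 / ((n : ℝ) + 1) ^ p) := by
    have := (Real.summable_one_div_nat_pow (p := p)).2 hp
    have := (summable_nat_add_iff 1).2 this
    simpa using this
  have h1 : (1 : ℝ) < ((p : ℂ)).re := by
    simp only [Complex.natCast_re]
    exact_mod_cast Nat.lt_of_lt_of_le one_lt_two hp
  have hz : riemannZeta (p : ℂ) = ∑' n : ℕ, 1 / ((n : ℂ) + 1) ^ (p : ℂ) :=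
    zeta_eq_tsum_one_div_nat_add_one_cpow h1
  have hterm : ∀ n : ℕ, (1 : ℂ) / ((n : ℂ) + 1) ^ (p : ℂ)
      = ((1 / ((n : ℝ) + 1) ^ p : ℝ) : ℂ) := by
    intro n
    rw [show ((n : ℂ) + 1) ^ (p : ℂ) = ((n : ℂ) + 1) ^ (p : ℕ) from
      Complex.cpow_natCast _ p]
    push_cast
    ring
  have : riemannZeta (p : ℂ) = ((∑' n : ℕ, 1 / ((n : ℝ) + 1) ^ p : ℝ) : ℂ) := by
    rw [hz, Complex.ofReal_tsum]
    exact tsum_congr hterm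
  have hzr : zetaR p = ∑' n : ℕ, 1 / ((n : ℝ) + 1) ^ p := by
    unfold zetaR
    rw [show ((p : ℝ) : ℂ) = (p : ℂ) by push_cast; ring, this, Complex.ofReal_re]
  rw [hzr]; exact hsum.hasSum

lemma step2 {k s : ℕ} (hk : 1 ≤ k) (hs : k + 1 ≤ s) :
    HasSum (fun N : ℕ => (((N : ℝ) + 1) ^ k - (N : ℝ) ^ k) / ((N : ℝ) + 1) ^ s)
      (∑ j ∈ Finset.range k, (-1 : ℝ) ^ (k - 1 - j) * (k.choose j : ℝ) *
        zetaR ((s - j : ℕ))) := by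
  have key : HasSum (fun N : ℕ => ∑ j ∈ Finset.range k,
      (-1 : ℝ) ^ (k - 1 - j) * (k.choose j : ℝ) * (1 / ((N : ℝ) + 1) ^ (s - j)))
      (∑ j ∈ Finset.range k, (-1 : ℝ) ^ (k - 1 - j) * (k.choose j : ℝ) *
        zetaR ((s - j : ℕ))) := by
    apply hasSum_sum
    intro j hj
    rw [Finset.mem_range] at hj
    exact (zetaR_hasSum (by omega)).mul_left _
  have hpt : ∀ N : ℕ, (((N : ℝ) + 1) ^ k - (N : ℝ) ^ k) / ((N : ℝ) + 1) ^ s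
      = ∑ j ∈ Finset.range k,
        (-1 : ℝ) ^ (k - 1 - j) * (k.choose j : ℝ) * (1 / ((N : ℝ) + 1) ^ (s - j)) := by
    intro N
    set x : ℝ := (N : ℝ) + 1 with hxdef
    have hx0 : 0 < x := by positivity
    have hx : x ≠ 0 := ne_of_gt hx0
    have hnum : x ^ k - ((N : ℝ)) ^ k
        = ∑ j ∈ Finset.range k, (-1 : ℝ) ^ (k - 1 - j) * (k.choose j : ℝ) * x ^ j := by
      have hN : (N : ℝ) = x - 1 := by rw [hxdef]; ring
      rw [hN, sub_pow, Finset.sum_range_succ]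
      have h2 : (-1 : ℝ) ^ (k + k) = 1 := by
        rw [← two_mul, pow_mul]; norm_num
      rw [h2, Nat.choose_self]
      have : x ^ k - (∑ j ∈ Finset.range k,
          (-1 : ℝ) ^ (j + k) * x ^ j * 1 ^ (k - j) * (k.choose j : ℝ)
            + 1 * x ^ k * 1 ^ (k - k) * (1 : ℕ))
          = ∑ j ∈ Finset.range k,
            -((-1 : ℝ) ^ (j + k) * x ^ j * 1 ^ (k - j) * (k.choose j : ℝ)) := by
        rw [Finset.sum_neg_distrib]
        push_cast
        ring
      rw [this]
      apply Finset.sum_congr rfl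
      intro j hj
      rw [Finset.mem_range] at hj
      have he : j + k + 1 = (k - 1 - j) + 2 * (j + 1) := by omega
      have : -((-1 : ℝ) ^ (j + k)) = (-1 : ℝ) ^ (j + k + 1) := by
        rw [pow_succ]; ring
      rw [one_pow, mul_one, ← neg_mul, ← neg_mul, this, he, pow_add, pow_mul]
      norm_num
      ring
    rw [hnum, Finset.sum_div]
    apply Finset.sum_congr rfl
    intro j hj
    rw [Finset.mem_range] at hj
    rw [pow_sub₀ x hx (by omega : j ≤ s)]
    field_simp
  exact (funext hpt : _) ▸ key

lemma step3 {k s : ℕ} (hk : 1 ≤ k) {T : ℝ}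
    (hT : HasSum (fun N : ℕ => (((N : ℝ) + 1) ^ k - (N : ℝ) ^ k) / ((N : ℝ) + 1) ^ s) T) :
    HasSum (fun n : Fin k → ℕ =>
      1 / (((Finset.univ.sup' (Finset.univ_nonempty_iff.mpr ⟨⟨0, hk⟩⟩) n : ℕ) : ℝ) + 1) ^ s)
      T := by
  have ne : (Finset.univ : Finset (Fin k)).Nonempty :=
    Finset.univ_nonempty_iff.mpr ⟨⟨0, hk⟩⟩
  set M : (Fin k → ℕ) → ℕ := fun n => Finset.univ.sup' ne n with hM
  set F : (Fin k → ℕ) → ℝ := fun n => 1 / ((M n : ℝ) + 1) ^ s with hF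
  set S : ℕ → Finset (Fin k → ℕ) := fun N =>
    (Fintype.piFinset fun _ : Fin k => Finset.range (N + 1)) \
      (Fintype.piFinset fun _ : Fin k => Finset.range N) with hS
  have hle : ∀ (n : Fin k → ℕ) (i : Fin k), n i ≤ M n :=
    fun n i => Finset.le_sup' n (Finset.mem_univ i)
  have hex : ∀ n : Fin k → ℕ, ∃ i, M n = n i := by
    intro n
    obtain ⟨i0, -, hi0⟩ := Finset.exists_mem_eq_sup' ne n
    exact ⟨i0, hi0⟩
  have hmem : ∀ (n : Fin k → ℕ) (N : ℕ), n ∈ S N ↔ M n = N := by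
    intro n N
    simp only [hS, Finset.mem_sdiff, Fintype.mem_piFinset, Finset.mem_range]
    constructor
    · rintro ⟨hall, hnot⟩
      push_neg at hnot
      obtain ⟨i0, hi0⟩ := hnot
      obtain ⟨i1, hi1⟩ := hex n
      have h1 := hall i1
      have h2 := hle n i0
      omega
    · intro h
      obtain ⟨i0, hi0⟩ := hex n
      constructor
      · intro i
        have := hle n i
        omega
      · push_neg
        exact ⟨i0, by omega⟩
  have hcard : ∀ N, (S N).card = (N + 1) ^ k - N ^ k := by
    intro N
    rw [hS]
    rw [Finset.card_sdiff_of_subset (Fintype.piFinset_subset _ _ fun i =>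
      Finset.range_subset_range.2 (Nat.le_succ N))]
    simp [Fintype.card_piFinset]
  set c : ℕ → ℝ := fun N => (((N + 1) ^ k - N ^ k : ℕ) : ℝ) / ((N : ℝ) + 1) ^ s with hc
  have hc_eq : ∀ N, c N = (((N : ℝ) + 1) ^ k - (N : ℝ) ^ k) / ((N : ℝ) + 1) ^ s := by
    intro N
    show (((N + 1) ^ k - N ^ k : ℕ) : ℝ) / ((N : ℝ) + 1) ^ s = _
    rw [Nat.cast_sub (Nat.pow_le_pow_left (Nat.le_succ N) k)]
    push_cast
    ring
  have hT' : HasSum c T := by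
    simpa only [← hc_eq] using hT
  have hfib : ∀ N : ℕ, HasSum (fun p : {n : Fin k → ℕ // M n = N} => F p.1) (c N) := by
    intro N
    let e2 : {n : Fin k → ℕ // n ∈ S N} ≃ {n : Fin k → ℕ // M n = N} :=
      Equiv.subtypeEquivRight (fun n => hmem n N)
    have hcomp : ((fun p : {n : Fin k → ℕ // M n = N} => F p.1) ∘ e2)
        = fun p : {n : Fin k → ℕ // n ∈ S N} => F p.1 := by funext p; rfl
    rw [← e2.hasSum_iff, hcomp]
    have h1 : HasSum (fun p : {n : Fin k → ℕ // n ∈ S N} => F p.1)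
        (∑ p : {n : Fin k → ℕ // n ∈ S N}, F p.1) := hasSum_fintype _
    have h3 : (∑ p : {n : Fin k → ℕ // n ∈ S N}, F p.1) = c N := by
      rw [Finset.sum_coe_sort (S N) F]
      have h4 : ∑ n ∈ S N, F n = ∑ _n ∈ S N, 1 / ((N : ℝ) + 1) ^ s := by
        apply Finset.sum_congr rfl
        intro n hn
        have h5 := (hmem n N).1 hn
        show 1 / ((M n : ℝ) + 1) ^ s = _
        rw [h5]
      rw [h4, Finset.sum_const, hcard N, nsmul_eq_mul]
      show _ = (((N + 1) ^ k - N ^ k : ℕ) : ℝ) / ((N : ℝ) + 1) ^ s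
      ring
    rw [← h3]
    exact h1
  set e := Equiv.sigmaFiberEquiv M with he
  have hnn : ∀ p : Σ N : ℕ, {n : Fin k → ℕ // M n = N}, 0 ≤ (F ∘ e) p := by
    intro p
    show (0:ℝ) ≤ 1 / ((M (e p) : ℝ) + 1) ^ s
    positivity
  have hsummable : Summable (F ∘ e) := by
    apply (summable_sigma_of_nonneg hnn).2
    refine ⟨fun N => (hfib N).summable, ?_⟩
    apply Summable.congr hT'.summable
    intro N
    exact ((hfib N).tsum_eq).symm
  rw [← e.hasSum_iff]
  apply hsummable.hasSum_iff.2
  rw [hsummable.tsum_sigma]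
  calc ∑' N, ∑' (q : {n : Fin k → ℕ // M n = N}), (F ∘ e) ⟨N, q⟩
      = ∑' N, c N := by
        apply tsum_congr
        intro N
        exact (hfib N).tsum_eq
    _ = T := hT'.tsum_eq

lemma step4 {k m ℓ : ℕ} (hk : 1 ≤ k) (hml : ℓ ≤ m) (n : Fin k → ℕ) :
    (Finset.univ.inf' (Finset.univ_nonempty_iff.mpr ⟨⟨0, hk⟩⟩)
        (fun i => 1 / ((n i : ℝ) + 1) ^ m)) *
      (Finset.univ.sup' (Finset.univ_nonempty_iff.mpr ⟨⟨0, hk⟩⟩)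
        (fun i => ((n i : ℝ) + 1) ^ ℓ))
    = 1 / (((Finset.univ.sup' (Finset.univ_nonempty_iff.mpr ⟨⟨0, hk⟩⟩) n : ℕ) : ℝ) + 1)
        ^ (m - ℓ) := by
  have ne : (Finset.univ : Finset (Fin k)).Nonempty :=
    Finset.univ_nonempty_iff.mpr ⟨⟨0, hk⟩⟩
  set x : ℝ := ((Finset.univ.sup' ne n : ℕ) : ℝ) + 1 with hx
  have hle : ∀ i, (n i : ℝ) + 1 ≤ x := by
    intro i
    have : n i ≤ Finset.univ.sup' ne n := Finset.le_sup' n (Finset.mem_univ i)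
    rw [hx]
    push_cast
    exact_mod_cast Nat.succ_le_succ this
  have hex : ∃ i, (n i : ℝ) + 1 = x := by
    obtain ⟨i0, -, hi0⟩ := Finset.exists_mem_eq_sup' ne n
    exact ⟨i0, by rw [hx, hi0]⟩
  have hpos : ∀ i, (0:ℝ) < (n i : ℝ) + 1 := fun i => by positivity
  have hxpos : (0:ℝ) < x := by rw [hx]; positivity
  obtain ⟨i0, hi0⟩ := hex
  have hinf : (Finset.univ.inf' ne (fun i => 1 / ((n i : ℝ) + 1) ^ m)) = 1 / x ^ m := by
    apply le_antisymm
    · calc Finset.univ.inf' ne (fun i => 1 / ((n i : ℝ) + 1) ^ m)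
          ≤ 1 / ((n i0 : ℝ) + 1) ^ m := Finset.inf'_le _ (Finset.mem_univ i0)
        _ = 1 / x ^ m := by rw [hi0]
    · apply Finset.le_inf'
      intro i _
      apply one_div_le_one_div_of_le (by positivity)
      exact pow_le_pow_left₀ (le_of_lt (hpos i)) (hle i) m
  have hsup : (Finset.univ.sup' ne (fun i => ((n i : ℝ) + 1) ^ ℓ)) = x ^ ℓ := by
    apply le_antisymm
    · apply Finset.sup'_le
      intro i _
      exact pow_le_pow_left₀ (le_of_lt (hpos i)) (hle i) ℓ
    · calc x ^ ℓ = ((n i0 : ℝ) + 1) ^ ℓ := by rw [hi0]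
        _ ≤ _ := Finset.le_sup' (fun i => ((n i : ℝ) + 1) ^ ℓ) (Finset.mem_univ i0)
  rw [hinf, hsup, pow_sub₀ x (ne_of_gt hxpos) hml]
  field_simp


theorem stmt19 (m ℓ : ℕ) (hml : ℓ + 2 ≤ m) (k : ℕ) (hk : 1 ≤ k) (hmkl : k + ℓ + 1 ≤ m) :
    HasSum
      (fun n : Fin k → ℕ =>
        (Finset.univ.inf' (Finset.univ_nonempty_iff.mpr ⟨⟨0, hk⟩⟩)
          (fun i => 1 / ((n i : ℝ) + 1) ^ m)) *
        (Finset.univ.sup' (Finset.univ_nonempty_iff.mpr ⟨⟨0, hk⟩⟩)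
          (fun i => ((n i : ℝ) + 1) ^ ℓ)))
      (∑ j ∈ Finset.range k, (-1 : ℝ) ^ (k - 1 - j) * (k.choose j : ℝ) *
        zetaR ((m : ℝ) - (ℓ : ℝ) - (j : ℝ))) := by
  have key := step3 (s := m - ℓ) hk (step2 hk (by omega))
  have hsum_eq : (∑ j ∈ Finset.range k, (-1 : ℝ) ^ (k - 1 - j) * (k.choose j : ℝ) *
      zetaR (((m - ℓ) - j : ℕ)))
      = ∑ j ∈ Finset.range k, (-1 : ℝ) ^ (k - 1 - j) * (k.choose j : ℝ) *
        zetaR ((m : ℝ) - (ℓ : ℝ) - (j : ℝ)) := by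
    apply Finset.sum_congr rfl
    intro j hj
    rw [Finset.mem_range] at hj
    have hcast : (((m - ℓ) - j : ℕ) : ℝ) = (m : ℝ) - (ℓ : ℝ) - (j : ℝ) := by
      rw [Nat.cast_sub (by omega : j ≤ m - ℓ), Nat.cast_sub (by omega : ℓ ≤ m)]
    rw [hcast]
  rw [hsum_eq] at key
  have hpt : ∀ n : Fin k → ℕ,
      (Finset.univ.inf' (Finset.univ_nonempty_iff.mpr ⟨⟨0, hk⟩⟩)
          (fun i => 1 / ((n i : ℝ) + 1) ^ m)) *
        (Finset.univ.sup' (Finset.univ_nonempty_iff.mpr ⟨⟨0, hk⟩⟩)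
          (fun i => ((n i : ℝ) + 1) ^ ℓ))
      = 1 / (((Finset.univ.sup' (Finset.univ_nonempty_iff.mpr ⟨⟨0, hk⟩⟩) n : ℕ) : ℝ) + 1)
          ^ (m - ℓ) := fun n => step4 hk (by omega) n
  exact (funext hpt : _) ▸ key
end
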